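/- arXiv:1803.03864 — 6 statements merged into one kernel-verified Lean document; each statement's English description precedes it below -/
import Mathlib

section
/- Let S = {S_i} be a scalar sequence over a field F annihilated by a monic polynomial f of degree d (i.e., Σ_{i=0}^d f_i S_{k+i} = 0 for all k ≥ 0), and let g ∈ F[x]. Define the action (gS)_k = Σ_i g_i S_{k+i}, and ω_f(S) = (S_0, ..., S_{d-1})^T ∈ F^d. Then ω_f(gS) = ρ(g)^T · ω_f(S), where ρ is the regular representation of F[x]/(f); equivalently, if φ_f(S) = P·ω_f(S) for a nonsingular P with P·ρ(a)^T = ρ(a)·P for all a, then φ_f(gS) = ρ(g)·φ_f(S). -/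
open Polynomial Matrix

/-- Companion matrix of a (monic) polynomial `f`, of size `d`. -/
def companionMat {F : Type*} [Field F] (f : F[X]) (d : ℕ) : Matrix (Fin d) (Fin d) F :=
  fun i j => if (j : ℕ) + 1 = d then -f.coeff i else if (i : ℕ) = (j : ℕ) + 1 then 1 else 0

theorem companionMat_shift {F : Type*} [Field F] (f : F[X]) (d : ℕ)
    (hf : f.Monic) (hdeg : f.natDegree = d)
    (S : ℕ → F) (hS : ∀ k : ℕ, ∑ i ∈ Finset.range (d + 1), f.coeff i * S (k + i) = 0)
    (k : ℕ) :
    (companionMat f d)ᵀ *ᵥ (fun i : Fin d => S (k + i)) = fun i : Fin d => S (k + 1 + i) := by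
  funext i
  simp only [mulVec, dotProduct, transpose_apply, companionMat]
  by_cases h : (i : ℕ) + 1 = d
  · simp only [if_pos h]
    have h0 := hS k
    rw [Finset.sum_range_succ] at h0
    have hfd : f.coeff d = 1 := by rw [← hdeg]; exact hf.coeff_natDegree
    rw [hfd, one_mul] at h0
    have hkey : S (k + d) = ∑ j ∈ Finset.range d, -f.coeff j * S (k + j) := by
      have := eq_neg_of_add_eq_zero_right h0
      rw [this, ← Finset.sum_neg_distrib]
      exact Finset.sum_congr rfl (fun j _ => by ring)
    have : k + 1 + (i : ℕ) = k + d := by omega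
    rw [this, hkey, ← Fin.sum_univ_eq_sum_range (fun j => -f.coeff j * S (k + j)) d]
  · simp only [if_neg h]
    have hi1 : (i : ℕ) + 1 < d := lt_of_le_of_ne i.2 h
    have heq : ∀ j : Fin d, (if (j : ℕ) = (i : ℕ) + 1 then (1:F) else 0) * S (k + j)
        = if j = ⟨(i : ℕ) + 1, hi1⟩ then S (k + j) else 0 := by
      intro j
      by_cases hj : j = ⟨(i : ℕ) + 1, hi1⟩
      · subst hj; simp
      · rw [if_neg hj, if_neg, zero_mul]
        exact fun hc => hj (Fin.ext hc)
    rw [Finset.sum_congr rfl (fun j _ => heq j), Finset.sum_ite_eq' Finset.univ]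
    simp [show k + ((i:ℕ)+1) = k + 1 + i by omega]

theorem companionMat_pow_shift {F : Type*} [Field F] (f : F[X]) (d : ℕ)
    (hf : f.Monic) (hdeg : f.natDegree = d)
    (S : ℕ → F) (hS : ∀ k : ℕ, ∑ i ∈ Finset.range (d + 1), f.coeff i * S (k + i) = 0)
    (n : ℕ) :
    ((companionMat f d) ^ n)ᵀ *ᵥ (fun i : Fin d => S (i : ℕ)) = fun i : Fin d => S (n + i) := by
  induction n with
  | zero => simp
  | succ n ih =>
    rw [pow_succ, transpose_mul, ← mulVec_mulVec, ih, companionMat_shift f d hf hdeg S hS n]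

theorem sum_mulVec' {F : Type*} [Field F] {d : ℕ} {ι : Type*} (s : Finset ι)
    (A : ι → Matrix (Fin d) (Fin d) F) (v : Fin d → F) :
    (∑ t ∈ s, A t) *ᵥ v = ∑ t ∈ s, A t *ᵥ v := by
  funext i
  simp only [mulVec, dotProduct, Matrix.sum_apply, Finset.sum_apply, Finset.sum_mul]
  rw [Finset.sum_comm]

theorem omega_eq {F : Type*} [Field F] (f : F[X]) (d : ℕ)
    (hf : f.Monic) (hdeg : f.natDegree = d)
    (S : ℕ → F) (hS : ∀ k : ℕ, ∑ i ∈ Finset.range (d + 1), f.coeff i * S (k + i) = 0)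
    (g : F[X]) :
    ((fun i : Fin d => ∑ j ∈ Finset.range (g.natDegree + 1), g.coeff j * S ((i : ℕ) + j))
        = (Polynomial.aeval (companionMat f d) g)ᵀ *ᵥ (fun i : Fin d => S (i : ℕ))) := by
  rw [Polynomial.aeval_eq_sum_range, transpose_sum]
  funext i
  rw [sum_mulVec']
  simp only [Finset.sum_apply]
  refine Finset.sum_congr rfl (fun j _ => ?_)
  rw [transpose_smul, smul_mulVec, companionMat_pow_shift f d hf hdeg S hS j]
  simp [mul_comm, add_comm]

/-- For a scalar sequence `S` annihilated by monic `f` of degree `d` and `g ∈ F[x]`: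
`ω_f(gS) = ρ(g)ᵀ ω_f(S)`, and consequently, for any nonsingular `P` intertwining `ρᵀ`
and `ρ`, `φ_f(gS) = ρ(g) φ_f(S)` where `φ_f(S) = P ω_f(S)`. -/
theorem stmt3 {F : Type*} [Field F] (f : F[X]) (d : ℕ) (hd : 1 ≤ d)
    (hf : f.Monic) (hdeg : f.natDegree = d)
    (S : ℕ → F) (hS : ∀ k : ℕ, ∑ i ∈ Finset.range (d + 1), f.coeff i * S (k + i) = 0)
    (g : F[X]) :
    ((fun i : Fin d => ∑ j ∈ Finset.range (g.natDegree + 1), g.coeff j * S ((i : ℕ) + j))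
        = (Polynomial.aeval (companionMat f d) g)ᵀ *ᵥ (fun i : Fin d => S (i : ℕ)))
    ∧ ∀ P : Matrix (Fin d) (Fin d) F, P.det ≠ 0 →
        (∀ a : F[X], P * (Polynomial.aeval (companionMat f d) a)ᵀ
            = Polynomial.aeval (companionMat f d) a * P) →
        P *ᵥ (fun i : Fin d => ∑ j ∈ Finset.range (g.natDegree + 1), g.coeff j * S ((i : ℕ) + j))
          = Polynomial.aeval (companionMat f d) g *ᵥ (P *ᵥ fun i : Fin d => S (i : ℕ)) := by
  have hmain := omega_eq f d hf hdeg S hS g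
  refine ⟨hmain, fun P _ hint => ?_⟩
  rw [hmain, mulVec_mulVec, mulVec_mulVec, hint g]
end

section
/- Let f ∈ F_q[x] be irreducible of degree d, C_f its companion matrix, and U, V ∈ F_q^{d×b} with columns U_1,...,U_b and V_1,...,V_b. Then the (i,j)-entry of the sequence S_k = U^T C_f^k V satisfies ω_f(S_{·,ij}) = ρ(V_j)^T U_i, where ω_f maps the sequence to the column vector of its first d terms and ρ is the regular representation of F_q[x]/(f). Consequently φ_f(S) := P·ω_f(S) applied entrywise equals the outer product (in the field F_q[x]/(f) ≅ F_{q^d}) of the vector (P U_1, ..., P U_b) and the vector (V_1, ..., V_b), where P is a nonsingular matrix with Pρ(a)^T = ρ(a)P for all a. -/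
open Polynomial Matrix

/-- The polynomial with coefficient vector `v`. -/
noncomputable def vecToPoly {F : Type*} [Field F] {d : ℕ} (v : Fin d → F) : F[X] :=
  ∑ i : Fin d, Polynomial.C (v i) * Polynomial.X ^ (i : ℕ)

namespace Stmt7Aux

variable {F : Type*} [Field F]

lemma coeff_vecToPoly {d : ℕ} (v : Fin d → F) (n : ℕ) :
    (vecToPoly v).coeff n = if h : n < d then v ⟨n, h⟩ else 0 := by
  unfold vecToPoly
  rw [finset_sum_coeff]
  simp only [coeff_C_mul, coeff_X_pow, mul_ite, mul_one, mul_zero]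
  split_ifs with h
  · rw [Finset.sum_eq_single (⟨n, h⟩ : Fin d)]
    · simp
    · intro i _ hi
      simp only [ite_eq_right_iff]
      intro hin
      exact absurd (Fin.ext hin.symm : i = ⟨n, h⟩) hi
    · simp
  · refine Finset.sum_eq_zero fun i _ => ?_
    simp only [ite_eq_right_iff]
    intro hin
    exact absurd (hin ▸ i.isLt) h

lemma vecToPoly_add {d : ℕ} (v w : Fin d → F) :
    vecToPoly (v + w) = vecToPoly v + vecToPoly w := by
  unfold vecToPoly
  rw [← Finset.sum_add_distrib]
  refine Finset.sum_congr rfl fun i _ => ?_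
  simp [add_mul]

lemma vecToPoly_smul {d : ℕ} (c : F) (v : Fin d → F) :
    vecToPoly (c • v) = C c * vecToPoly v := by
  unfold vecToPoly
  rw [Finset.mul_sum]
  refine Finset.sum_congr rfl fun i _ => ?_
  simp [mul_assoc, C_mul]

lemma degree_vecToPoly_lt {d : ℕ} (hd1 : 1 ≤ d) (v : Fin d → F) :
    (vecToPoly v).degree < (d : ℕ) := by
  unfold vecToPoly
  refine lt_of_le_of_lt (degree_sum_le _ _) ?_
  rw [Finset.sup_lt_iff (by exact_mod_cast WithBot.bot_lt_coe d)]
  intro i _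
  exact lt_of_le_of_lt (degree_C_mul_X_pow_le _ _) (by exact_mod_cast i.isLt)


lemma mulVec_companion {f : F[X]} {d : ℕ} (hd1 : 1 ≤ d) (w : Fin d → F) (i : Fin d) :
    (companionMat f d *ᵥ w) i
      = (if h : 1 ≤ (i : ℕ) then w ⟨(i : ℕ) - 1, by omega⟩ else 0)
        - f.coeff i * w ⟨d - 1, by omega⟩ := by
  rw [mulVec, dotProduct]
  by_cases h1 : 1 ≤ (i : ℕ)
  · rw [dif_pos h1]
    have key : ∀ j : Fin d, companionMat f d i j * w j
        = (if j = (⟨d - 1, by omega⟩ : Fin d) then -f.coeff i * w j else 0)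
          + (if j = (⟨(i : ℕ) - 1, by omega⟩ : Fin d) then w j else 0) := by
      intro j
      have hi := i.isLt
      have hj := j.isLt
      simp only [companionMat, Fin.ext_iff]
      split_ifs <;> first | (exfalso; omega) | ring1
    rw [Finset.sum_congr rfl fun j _ => key j, Finset.sum_add_distrib,
      Finset.sum_ite_eq' Finset.univ, Finset.sum_ite_eq' Finset.univ]
    simp only [Finset.mem_univ, if_true]
    ring
  · rw [dif_neg h1]
    have key : ∀ j : Fin d, companionMat f d i j * w j
        = (if j = (⟨d - 1, by omega⟩ : Fin d) then -f.coeff i * w j else 0) := by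
      intro j
      have hi := i.isLt
      have hj := j.isLt
      simp only [companionMat, Fin.ext_iff]
      split_ifs <;> first | (exfalso; omega) | ring1
    rw [Finset.sum_congr rfl fun j _ => key j, Finset.sum_ite_eq' Finset.univ]
    simp only [Finset.mem_univ, if_true]
    ring


lemma vecToPoly_modByMonic {f : F[X]} {d : ℕ} (hmonic : f.Monic) (hd : f.natDegree = d)
    (hd1 : 1 ≤ d) (v : Fin d → F) : vecToPoly v %ₘ f = vecToPoly v := by
  rw [modByMonic_eq_self_iff hmonic, degree_eq_natDegree hmonic.ne_zero, hd]
  exact degree_vecToPoly_lt hd1 v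

lemma add_f_mul_modByMonic {f : F[X]} (hmonic : f.Monic) (p r : F[X]) :
    (p + f * r) %ₘ f = p %ₘ f := by
  rw [add_modByMonic, self_mul_modByMonic hmonic, add_zero]

lemma mul_modByMonic_modByMonic {f : F[X]} (hmonic : f.Monic) (a p : F[X]) :
    (a * (p %ₘ f)) %ₘ f = (a * p) %ₘ f := by
  conv_rhs => rw [← modByMonic_add_div p f]
  rw [mul_add, ← mul_assoc, mul_comm a f, mul_assoc, add_f_mul_modByMonic hmonic]

lemma C_mul_modByMonic {f : F[X]} (hmonic : f.Monic) (c : F) (p : F[X]) :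
    (C c * p) %ₘ f = C c * (p %ₘ f) := by
  rw [← mul_modByMonic_modByMonic hmonic]
  rw [modByMonic_eq_self_iff hmonic]
  calc (C c * (p %ₘ f)).degree ≤ (C c).degree + (p %ₘ f).degree := degree_mul_le _ _
    _ ≤ 0 + (p %ₘ f).degree := add_le_add_left degree_C_le _
    _ = (p %ₘ f).degree := by rw [zero_add]
    _ < f.degree := degree_modByMonic_lt _ hmonic

lemma key_shift {f : F[X]} {d : ℕ} (hmonic : f.Monic) (hd : f.natDegree = d)
    (hd1 : 1 ≤ d) (w : Fin d → F) :
    vecToPoly (companionMat f d *ᵥ w)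
      = X * vecToPoly w - C (w ⟨d - 1, by omega⟩) * f := by
  ext n
  rw [coeff_sub, coeff_C_mul, coeff_vecToPoly]
  match n with
  | 0 =>
    rw [mul_coeff_zero, coeff_X_zero, zero_mul]
    rw [dif_pos (by omega : 0 < d), mulVec_companion hd1]
    simp only [Fin.val_mk]
    rw [dif_neg (by omega)]
    ring
  | Nat.succ n =>
    rw [coeff_X_mul, coeff_vecToPoly]
    by_cases h : n + 1 < d
    · rw [dif_pos h, mulVec_companion hd1, dif_pos (by omega : 1 ≤ n + 1),
        dif_pos (by omega : n < d)]
      simp only [Fin.val_mk, Nat.succ_sub_one, Nat.succ_eq_add_one]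
      ring
    · rw [dif_neg h]
      by_cases h2 : n + 1 = d
      · rw [dif_pos (by omega : n < d)]
        have hc : f.coeff (n + 1) = 1 := by rw [h2, ← hd]; exact hmonic.coeff_natDegree
        have : (⟨n, by omega⟩ : Fin d) = ⟨d - 1, by omega⟩ := by
          simp [Fin.ext_iff]; omega
        rw [hc, this]
        ring
      · rw [dif_neg (by omega)]
        have hc : f.coeff (n + 1) = 0 :=
          coeff_eq_zero_of_natDegree_lt (by omega)
        rw [hc]
        ring

lemma companion_mulVec_single {f : F[X]} {d : ℕ} {k : Fin d} (h : (k : ℕ) + 1 < d) :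
    companionMat f d *ᵥ Pi.single k 1 = Pi.single (⟨(k : ℕ) + 1, h⟩ : Fin d) 1 := by
  funext i
  rw [mulVec_single_one]
  simp only [companionMat, mul_one, Pi.single_apply, Fin.ext_iff, Fin.val_mk, col_apply]
  split_ifs <;> first | rfl | (exfalso; omega)

lemma pow_mulVec_single0 {f : F[X]} {d : ℕ} (hd1 : 1 ≤ d) (l : ℕ) (hl : l < d) :
    (companionMat f d ^ l) *ᵥ Pi.single (⟨0, by omega⟩ : Fin d) 1
      = Pi.single (⟨l, hl⟩ : Fin d) 1 := by
  induction l with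
  | zero => rw [pow_zero, one_mulVec]
  | succ n ih =>
    rw [pow_succ', ← mulVec_mulVec, ih (by omega),
      companion_mulVec_single (k := ⟨n, by omega⟩) (by simpa using hl)]

lemma sum_mulVec' {ι : Type*} (s : Finset ι) {m : ℕ} (M : ι → Matrix (Fin m) (Fin m) F)
    (v : Fin m → F) : (∑ i ∈ s, M i) *ᵥ v = ∑ i ∈ s, M i *ᵥ v := by
  funext k
  simp only [mulVec, dotProduct, Matrix.sum_apply, Finset.sum_mul, Finset.sum_apply]
  exact Finset.sum_comm

lemma aeval_mulVec_single0 {f : F[X]} {d : ℕ} (hd1 : 1 ≤ d) (v : Fin d → F) :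
    (Polynomial.aeval (companionMat f d) (vecToPoly v)) *ᵥ Pi.single (⟨0, by omega⟩ : Fin d) 1
      = v := by
  unfold vecToPoly
  rw [map_sum, sum_mulVec']
  funext k
  rw [Finset.sum_apply]
  have step : ∀ i : Fin d,
      ((Polynomial.aeval (companionMat f d)) (C (v i) * X ^ (i : ℕ))
        *ᵥ Pi.single (⟨0, by omega⟩ : Fin d) 1) k = v i * (if i = k then 1 else 0) := by
    intro i
    rw [_root_.map_mul, aeval_C, map_pow, aeval_X, ← Algebra.smul_def, smul_mulVec,
      pow_mulVec_single0 hd1 _ i.isLt]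
    simp [Pi.single_apply, Fin.ext_iff, eq_comm]
  rw [Finset.sum_congr rfl fun i _ => step i]
  simp

lemma pow_mulVec {f : F[X]} {d : ℕ} (hd1 : 1 ≤ d) (w : Fin d → F) (l : Fin d) :
    companionMat f d ^ (l : ℕ) *ᵥ w
      = (Polynomial.aeval (companionMat f d) (vecToPoly w)) *ᵥ Pi.single l 1 := by
  conv_lhs => rw [← aeval_mulVec_single0 (f := f) hd1 w, mulVec_mulVec]
  have hcomm : companionMat f d ^ (l : ℕ) * Polynomial.aeval (companionMat f d) (vecToPoly w)
      = Polynomial.aeval (companionMat f d) (vecToPoly w) * companionMat f d ^ (l : ℕ) := by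
    have h1 : companionMat f d ^ (l : ℕ)
        = Polynomial.aeval (companionMat f d) ((X : F[X]) ^ (l : ℕ)) := by rw [map_pow, aeval_X]
    rw [h1, ← _root_.map_mul, mul_comm, _root_.map_mul]
  rw [hcomm, ← mulVec_mulVec, pow_mulVec_single0 hd1 _ l.isLt, Fin.eta]

lemma shift_mod {f : F[X]} {d : ℕ} (hmonic : f.Monic) (hd : f.natDegree = d)
    (hd1 : 1 ≤ d) (u : Fin d → F) :
    (X * vecToPoly u) %ₘ f = vecToPoly (companionMat f d *ᵥ u) := by
  have h := key_shift (d := d) hmonic hd hd1 u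
  have h2 : X * vecToPoly u
      = vecToPoly (companionMat f d *ᵥ u) + f * C (u ⟨d - 1, by omega⟩) := by
    rw [h]; ring
  rw [h2, add_f_mul_modByMonic hmonic, vecToPoly_modByMonic hmonic hd hd1]

lemma vecToPoly_pow_mulVec {f : F[X]} {d : ℕ} (hmonic : f.Monic) (hd : f.natDegree = d)
    (hd1 : 1 ≤ d) (n : ℕ) (w : Fin d → F) :
    vecToPoly (companionMat f d ^ n *ᵥ w) = (X ^ n * vecToPoly w) %ₘ f := by
  induction n with
  | zero => rw [pow_zero, one_mulVec, pow_zero, one_mul, vecToPoly_modByMonic hmonic hd hd1]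
  | succ n ih =>
    rw [pow_succ', ← mulVec_mulVec, ← shift_mod hmonic hd hd1, ih,
      mul_modByMonic_modByMonic hmonic, pow_succ', mul_assoc]

lemma aeval_mulVec {f : F[X]} {d : ℕ} (hmonic : f.Monic) (hd : f.natDegree = d)
    (hd1 : 1 ≤ d) (a : F[X]) (w : Fin d → F) :
    vecToPoly (Polynomial.aeval (companionMat f d) a *ᵥ w) = (a * vecToPoly w) %ₘ f := by
  induction a using Polynomial.induction_on' with
  | add p q hp hq =>
    rw [map_add, add_mulVec, vecToPoly_add, hp, hq, add_mul, add_modByMonic]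
  | monomial n c =>
    rw [← C_mul_X_pow_eq_monomial, _root_.map_mul, aeval_C, map_pow, aeval_X, ← Algebra.smul_def,
      smul_mulVec, vecToPoly_smul, vecToPoly_pow_mulVec hmonic hd hd1,
      mul_assoc, C_mul_modByMonic hmonic]

end Stmt7Aux

open Stmt7Aux in
/-- Each entry of the projected sequence `S_k = Uᵀ C_f^k V` satisfies
`ω_f(S_{·,ij}) = ρ(V_j)ᵀ U_i`, and hence `φ_f(S) = P ω_f(S)` is (entrywise) the outer product
in `F_q[x]/(f) ≅ F_{q^d}` of the vectors `(P U_i)_i` and `(V_j)_j`. -/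
theorem stmt7 {F : Type*} [Field F] [Fintype F] (f : F[X]) (hf : Irreducible f)
    (hmonic : f.Monic) (d : ℕ) (hd : f.natDegree = d) (hd1 : 1 ≤ d) (b : ℕ)
    (U V : Matrix (Fin d) (Fin b) F)
    (P : Matrix (Fin d) (Fin d) F) (hP : P.det ≠ 0)
    (hPint : ∀ a : F[X], P * (Polynomial.aeval (companionMat f d) a)ᵀ
        = Polynomial.aeval (companionMat f d) a * P) :
    (∀ i j : Fin b,
        (fun l : Fin d => (Uᵀ * companionMat f d ^ (l : ℕ) * V) i j)
          = (Polynomial.aeval (companionMat f d) (vecToPoly (Vᵀ j)))ᵀ *ᵥ Uᵀ i)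
    ∧ (∀ i j : Fin b,
        vecToPoly (P *ᵥ fun l : Fin d => (Uᵀ * companionMat f d ^ (l : ℕ) * V) i j)
          = (vecToPoly (Vᵀ j) * vecToPoly (P *ᵥ Uᵀ i)) %ₘ f) := by
  have part1 : ∀ i j : Fin b,
      (fun l : Fin d => (Uᵀ * companionMat f d ^ (l : ℕ) * V) i j)
        = (Polynomial.aeval (companionMat f d) (vecToPoly (Vᵀ j)))ᵀ *ᵥ Uᵀ i := by
    intro i j
    funext l
    have hcol : ∀ k : Fin d, ∑ m : Fin d, (companionMat f d ^ (l : ℕ)) k m * V m j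
        = (Polynomial.aeval (companionMat f d) (vecToPoly (Vᵀ j))) k l := by
      intro k
      have h := congrFun (pow_mulVec (f := f) hd1 (Vᵀ j) l) k
      rw [mulVec_single] at h
      simpa [mulVec, dotProduct, transpose_apply, mul_one] using h
    have hr : ((Polynomial.aeval (companionMat f d) (vecToPoly (Vᵀ j)))ᵀ *ᵥ Uᵀ i) l
        = ∑ k : Fin d, (Polynomial.aeval (companionMat f d) (vecToPoly (Vᵀ j))) k l * U k i := by
      simp [mulVec, dotProduct]
    rw [hr, Matrix.mul_assoc, mul_apply]
    refine Finset.sum_congr rfl fun k _ => ?_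
    rw [transpose_apply, mul_apply, hcol k]
    ring
  refine ⟨part1, fun i j => ?_⟩
  rw [part1 i j, mulVec_mulVec, hPint (vecToPoly (Vᵀ j)), ← mulVec_mulVec]
  exact aeval_mulVec hmonic hd hd1 _ _
end

section
/- Let q ≥ 2, b ≥ 1, and for 1 ≤ r ≤ b let P_t(r) = Σ_{i=r}^{t} Q_{q,b,i}(t) (the probability that a sum of t random outer products over F_q^b has rank at least r), where Q is defined by the recurrence with U_r = (1 − q^{r−b})^2 and D_r = q^{r−1}(q^r−1)/q^{2b}. Then P_t(r) ≥ P_r(r) for all t ≥ r; i.e., adding more outer products can only increase the probability of attaining rank at least r. -/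
/-- `U_r = (1 − 1/q^{b−r})²`. -/
noncomputable def Ufun (q : ℝ) (b : ℕ) (r : ℤ) : ℝ := (1 - 1 / q ^ ((b : ℤ) - r)) ^ 2

/-- `D_r = q^{r−1}(q^r − 1)/q^{2b}`. -/
noncomputable def Dfun (q : ℝ) (b : ℕ) (r : ℤ) : ℝ :=
  q ^ (r - 1) * (q ^ r - 1) / q ^ (2 * (b : ℤ))

/-- The rank-distribution recurrence `Q_{q,b,r}(t)`. -/
noncomputable def Qfun (q : ℝ) (b : ℕ) : ℕ → ℤ → ℝ
  | 0, r => if r = 0 then 1 else 0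
  | (t + 1), r =>
      if r < 0 ∨ r > min ((t : ℤ) + 1) (b : ℤ) then 0
      else Qfun q b t (r - 1) * Ufun q b (r - 1)
           + Qfun q b t r * (1 - Ufun q b r - Dfun q b r)
           + Qfun q b t (r + 1) * Dfun q b (r + 1)

namespace Stmt11Aux

lemma Ufun_nonneg (q : ℝ) (b : ℕ) (r : ℤ) : 0 ≤ Ufun q b r := sq_nonneg _

lemma Dfun_nonneg {q : ℝ} (hq : 2 ≤ q) (b : ℕ) {r : ℤ} (hr : 0 ≤ r) : 0 ≤ Dfun q b r := by
  have h0 : (0:ℝ) < q := by linarith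
  have h1 : (1:ℝ) ≤ q ^ r := one_le_zpow₀ (by linarith) hr
  have h2 : (0:ℝ) < q ^ (r - 1) := zpow_pos h0 _
  have h3 : (0:ℝ) < q ^ (2 * (b:ℤ)) := zpow_pos h0 _
  exact div_nonneg (mul_nonneg h2.le (by linarith)) h3.le

lemma Ufun_b (q : ℝ) (b : ℕ) : Ufun q b (b : ℤ) = 0 := by simp [Ufun]

lemma Dfun_zero (q : ℝ) (b : ℕ) : Dfun q b 0 = 0 := by simp [Dfun]

lemma key1 {q : ℝ} (hq : 2 ≤ q) {b : ℕ} {r : ℤ} (h0 : 0 ≤ r) (hb : r ≤ (b:ℤ)) :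
    Dfun q b r ≤ 1 - Ufun q b r := by
  have hq0 : (0:ℝ) < q := by linarith
  have hzq : q ^ (r - 1) = q ^ r / q := by
    rw [zpow_sub₀ (ne_of_gt hq0), zpow_one]
  set y := q ^ ((b:ℤ) - r) with hy'
  set z := q ^ r with hz'
  have hy : (1:ℝ) ≤ y := one_le_zpow₀ (by linarith) (by omega)
  have hz : (0:ℝ) < z := zpow_pos hq0 _
  have hA : q ^ (2 * (b:ℤ)) = (z * y) * (z * y) := by
    rw [hy', hz', ← zpow_add₀ (ne_of_gt hq0), ← zpow_add₀ (ne_of_gt hq0)]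
    ring_nf
  rw [Dfun, Ufun, hA, hzq, ← hz', ← hy']
  rw [div_le_iff₀ (by positivity)]
  have h1 : 1 - (1 - 1/y)^2 = 2/y - 1/y^2 := by field_simp; ring
  rw [h1]
  have expand : (2/y - 1/y^2) * (z*y*(z*y)) = 2*y*z^2 - z^2 := by
    field_simp
  rw [expand]
  rw [div_mul_eq_mul_div, div_le_iff₀ hq0]
  have hqy : (2:ℝ) ≤ (2*y-1)*q := by nlinarith
  nlinarith [mul_le_mul_of_nonneg_left hqy (sq_nonneg z), hz.le, sq_nonneg z]

lemma key2 {q : ℝ} (hq : 2 ≤ q) {b : ℕ} {r : ℤ} (h0 : 1 ≤ r) (hb : r ≤ (b:ℤ)) :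
    Dfun q b r ≤ 1 - Ufun q b (r - 1) := by
  have hq0 : (0:ℝ) < q := by linarith
  have hzq : q ^ (r - 1) = q ^ r / q := by
    rw [zpow_sub₀ (ne_of_gt hq0), zpow_one]
  have hw' : q ^ ((b:ℤ) - (r - 1)) = q ^ ((b:ℤ) - r) * q := by
    rw [show (b:ℤ) - (r-1) = ((b:ℤ)-r) + 1 by ring, zpow_add₀ (ne_of_gt hq0), zpow_one]
  set y := q ^ ((b:ℤ) - r) with hy'
  set z := q ^ r with hz'
  have hy : (0:ℝ) < y := zpow_pos hq0 _
  have hz : (0:ℝ) < z := zpow_pos hq0 _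
  have hy1 : (1:ℝ) ≤ y := one_le_zpow₀ (by linarith) (by omega)
  have hA : q ^ (2 * (b:ℤ)) = (z * y) * (z * y) := by
    rw [hy', hz', ← zpow_add₀ (ne_of_gt hq0), ← zpow_add₀ (ne_of_gt hq0)]
    ring_nf
  rw [Dfun, Ufun, hA, hzq, hw']
  rw [div_le_iff₀ (by positivity)]
  have h1 : 1 - (1 - 1/(y*q))^2 = 2/(y*q) - 1/(y*q)^2 := by
    field_simp; ring
  rw [h1]
  have expand : (2/(y*q) - 1/(y*q)^2) * (z*y*(z*y)) = 2*y*z^2/q - z^2/q^2 := by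
    field_simp
  rw [expand]
  rw [div_mul_eq_mul_div, div_le_iff₀ hq0]
  rw [← hz']
  have hxy : (2*y*z^2/q - z^2/q^2) * q = z^2 * (2*y - 1/q) := by field_simp
  rw [hxy]
  have hq05 : 1/q ≤ (1:ℝ)/2 := by
    rw [div_le_div_iff₀ hq0 (by norm_num)]; linarith
  have h32 : z^2 * (3/2 : ℝ) ≤ z^2 * (2*y - 1/q) := by
    apply mul_le_mul_of_nonneg_left _ (sq_nonneg z)
    linarith
  nlinarith [hz.le, sq_nonneg z]

lemma Qfun_eq_zero (q : ℝ) (b : ℕ) (t : ℕ) (i : ℤ)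
    (h : i < 0 ∨ (t:ℤ) < i ∨ (b:ℤ) < i) : Qfun q b t i = 0 := by
  cases t with
  | zero => simp only [Qfun, ite_eq_right_iff]; intro hi; exfalso; omega
  | succ t => simp only [Qfun]; rw [if_pos]; push_cast at h ⊢; omega

lemma Qfun_nonneg {q : ℝ} (hq : 2 ≤ q) (b : ℕ) : ∀ (t : ℕ) (i : ℤ), 0 ≤ Qfun q b t i := by
  intro t
  induction t with
  | zero => intro i; simp only [Qfun]; split_ifs <;> norm_num
  | succ t ih =>
    intro i
    simp only [Qfun]
    split_ifs with h
    · exact le_refl 0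
    · push_neg at h
      obtain ⟨h0, h1⟩ := h
      have hib : i ≤ (b:ℤ) := le_trans h1 (min_le_right _ _)
      have c1 : 0 ≤ 1 - Ufun q b i - Dfun q b i := by
        have := key1 hq (b := b) h0 hib
        linarith
      have c2 : 0 ≤ Dfun q b (i + 1) := Dfun_nonneg hq b (by omega)
      have u1 := Ufun_nonneg q b (i - 1)
      have q1 := ih (i - 1); have q2 := ih i; have q3 := ih (i + 1)
      have := mul_nonneg q1 u1
      have := mul_nonneg q2 c1
      have := mul_nonneg q3 c2
      linarith

lemma Qrec (q : ℝ) (b : ℕ) (t : ℕ) (i : ℤ) (h0 : 0 ≤ i) (hb : i ≤ (b:ℤ)) :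
    Qfun q b (t+1) i = Qfun q b t (i - 1) * Ufun q b (i - 1)
      + Qfun q b t i * (1 - Ufun q b i - Dfun q b i)
      + Qfun q b t (i + 1) * Dfun q b (i + 1) := by
  simp only [Qfun]
  split_ifs with h
  · have ht : (t:ℤ) + 1 < i := by omega
    rw [Qfun_eq_zero q b t (i-1) (by omega), Qfun_eq_zero q b t i (by omega),
      Qfun_eq_zero q b t (i+1) (by omega)]
    ring
  · rfl

noncomputable def S (q : ℝ) (b : ℕ) (t : ℕ) (r : ℤ) : ℝ :=
  ∑ i ∈ Finset.Icc r (b:ℤ), Qfun q b t i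

lemma sum_split_left (f : ℤ → ℝ) (a c : ℤ) (h : a ≤ c) :
    ∑ i ∈ Finset.Icc a c, f i = f a + ∑ i ∈ Finset.Icc (a+1) c, f i := by
  have he : Finset.Icc a c = insert a (Finset.Icc (a+1) c) := by
    ext x; simp; omega
  rw [he, Finset.sum_insert (by simp)]

lemma sum_split_right (f : ℤ → ℝ) (a c : ℤ) (h : a ≤ c + 1) :
    ∑ i ∈ Finset.Icc a (c+1), f i = (∑ i ∈ Finset.Icc a c, f i) + f (c+1) := by
  have he : Finset.Icc a (c+1) = insert (c+1) (Finset.Icc a c) := by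
    ext x; simp; omega
  rw [he, Finset.sum_insert (by simp)]
  ring

lemma sum_shift (f : ℤ → ℝ) (a c d : ℤ) :
    ∑ i ∈ Finset.Icc a c, f (i + d) = ∑ j ∈ Finset.Icc (a+d) (c+d), f j := by
  rw [← Finset.map_add_right_Icc, Finset.sum_map]
  rfl

lemma shift_down (g : ℤ → ℝ) (a c : ℤ) (h : a ≤ c) (hc : g c = 0) :
    ∑ i ∈ Finset.Icc a c, g (i - 1) = g (a - 1) + ∑ i ∈ Finset.Icc a c, g i := by
  have h1 : ∑ i ∈ Finset.Icc a c, g (i - 1) = ∑ j ∈ Finset.Icc (a - 1) (c - 1), g j := by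
    have h2 := sum_shift g a c (-1)
    simp only [← sub_eq_add_neg] at h2
    exact h2
  rw [h1, sum_split_left g (a-1) (c-1) (by omega), show a - 1 + 1 = a by ring]
  have h3 := sum_split_right g a (c-1) (by omega)
  rw [show c - 1 + 1 = c by ring] at h3
  rw [h3, hc, add_zero]

lemma shift_up (g : ℤ → ℝ) (a c : ℤ) (h : a ≤ c) (hc : g (c+1) = 0) :
    ∑ i ∈ Finset.Icc a c, g (i + 1) = (∑ i ∈ Finset.Icc a c, g i) - g a := by
  have h1 : ∑ i ∈ Finset.Icc a c, g (i + 1) = ∑ j ∈ Finset.Icc (a+1) (c+1), g j :=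
    sum_shift g a c 1
  rw [h1, sum_split_right g (a+1) c (by omega), hc, add_zero,
    sum_split_left g a c h]
  ring

lemma S_eq_zero (q : ℝ) (b : ℕ) (t : ℕ) {r : ℤ} (h : (b:ℤ) < r) : S q b t r = 0 := by
  rw [S, Finset.Icc_eq_empty (by omega), Finset.sum_empty]

lemma S_step {q : ℝ} (b : ℕ) (t : ℕ) (r : ℤ) (h0 : 0 ≤ r) :
    S q b (t+1) r = S q b t r + Qfun q b t (r-1) * Ufun q b (r-1)
      - Qfun q b t r * Dfun q b r := by
  rcases le_or_gt r (b:ℤ) with hrb | hrb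
  · have hsum : S q b (t+1) r =
        (∑ i ∈ Finset.Icc r (b:ℤ), Qfun q b t (i-1) * Ufun q b (i-1))
        + (∑ i ∈ Finset.Icc r (b:ℤ), Qfun q b t i * (1 - Ufun q b i - Dfun q b i))
        + (∑ i ∈ Finset.Icc r (b:ℤ), Qfun q b t (i+1) * Dfun q b (i+1)) := by
      rw [S, ← Finset.sum_add_distrib, ← Finset.sum_add_distrib]
      apply Finset.sum_congr rfl
      intro i hi
      simp only [Finset.mem_Icc] at hi
      exact Qrec q b t i (by omega) hi.2
    have e1 := shift_down (fun j => Qfun q b t j * Ufun q b j) r (b:ℤ) hrb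
      (by show Qfun q b t (b:ℤ) * Ufun q b (b:ℤ) = 0; rw [Ufun_b, mul_zero])
    have e2 := shift_up (fun j => Qfun q b t j * Dfun q b j) r (b:ℤ) hrb
      (by show Qfun q b t ((b:ℤ)+1) * Dfun q b ((b:ℤ)+1) = 0;
          rw [Qfun_eq_zero q b t ((b:ℤ)+1) (by omega), zero_mul])
    rw [hsum, e1, e2]
    have e3 : (∑ i ∈ Finset.Icc r (b:ℤ), Qfun q b t i * Ufun q b i)
        + (∑ i ∈ Finset.Icc r (b:ℤ), Qfun q b t i * (1 - Ufun q b i - Dfun q b i))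
        + (∑ i ∈ Finset.Icc r (b:ℤ), Qfun q b t i * Dfun q b i) = S q b t r := by
      rw [S, ← Finset.sum_add_distrib, ← Finset.sum_add_distrib]
      apply Finset.sum_congr rfl
      intro i _
      ring
    linarith [e3]
  · rw [S_eq_zero q b (t+1) hrb, S_eq_zero q b t hrb]
    rw [Qfun_eq_zero q b t r (by omega)]
    rcases eq_or_lt_of_le (show (b:ℤ) + 1 ≤ r by omega) with he | hlt
    · rw [show r - 1 = (b:ℤ) by omega, Ufun_b, mul_zero]
      ring
    · rw [Qfun_eq_zero q b t (r-1) (by omega)]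
      ring

lemma Q_as_S (q : ℝ) (b : ℕ) (t : ℕ) (r : ℤ) (h0 : 0 ≤ r) :
    Qfun q b t r = S q b t r - S q b t (r+1) := by
  rcases le_or_gt r (b:ℤ) with hrb | hrb
  · rw [S, sum_split_left (fun i => Qfun q b t i) r (b:ℤ) hrb, ← S]
    ring
  · rw [S_eq_zero q b t hrb, S_eq_zero q b t (by omega : (b:ℤ) < r + 1),
      Qfun_eq_zero q b t r (by omega)]
    ring

lemma S_rec {q : ℝ} (b : ℕ) (t : ℕ) (r : ℤ) (h1 : 1 ≤ r) :
    S q b (t+1) r = S q b t (r-1) * Ufun q b (r-1)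
      + S q b t r * (1 - Ufun q b (r-1) - Dfun q b r)
      + S q b t (r+1) * Dfun q b r := by
  have hs := S_step (q := q) b t r (by omega)
  have hq1 : Qfun q b t (r-1) = S q b t (r-1) - S q b t r := by
    have h2 := Q_as_S q b t (r-1) (by omega)
    rw [show r - 1 + 1 = r by ring] at h2
    exact h2
  have hq2 := Q_as_S q b t r (by omega)
  rw [hq1, hq2] at hs
  rw [hs]
  ring

lemma S_zero_step {q : ℝ} (b : ℕ) (t : ℕ) : S q b (t+1) 0 = S q b t 0 := by
  rw [S_step (q := q) b t 0 le_rfl, Qfun_eq_zero q b t ((0:ℤ)-1) (by omega), Dfun_zero,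
    zero_mul, mul_zero]
  ring

lemma S_mono {q : ℝ} (hq : 2 ≤ q) (b : ℕ) :
    ∀ (t : ℕ) (r : ℤ), 0 ≤ r → S q b t r ≤ S q b (t+1) r := by
  intro t
  induction t with
  | zero =>
    intro r hr
    rcases eq_or_lt_of_le hr with he | h1
    · rw [← he, S_zero_step]
    · have hz : S q b 0 r = 0 := by
        rw [S]
        apply Finset.sum_eq_zero
        intro i hi
        simp only [Finset.mem_Icc] at hi
        exact Qfun_eq_zero q b 0 i (by omega)
      rw [hz, S]
      apply Finset.sum_nonneg
      intro i _
      exact Qfun_nonneg hq b 1 i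
  | succ t ih =>
    intro r hr
    rcases eq_or_lt_of_le hr with he | h1
    · rw [← he, S_zero_step, S_zero_step]
      exact ih 0 le_rfl
    · rcases le_or_gt r (b:ℤ) with hrb | hrb
      · rw [S_rec (q := q) b t r (by omega), S_rec (q := q) b (t+1) r (by omega)]
        have c1 : 0 ≤ Ufun q b (r-1) := Ufun_nonneg q b _
        have c2 : 0 ≤ 1 - Ufun q b (r-1) - Dfun q b r := by
          have := key2 hq (b := b) (by omega) hrb
          linarith
        have c3 : 0 ≤ Dfun q b r := Dfun_nonneg hq b (by omega)
        have i1 := ih (r-1) (by omega)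
        have i2 := ih r (by omega)
        have i3 := ih (r+1) (by omega)
        have := mul_le_mul_of_nonneg_right i1 c1
        have := mul_le_mul_of_nonneg_right i2 c2
        have := mul_le_mul_of_nonneg_right i3 c3
        linarith
      · rw [S_eq_zero q b (t+1) hrb, S_eq_zero q b (t+1+1) hrb]

lemma S_mono' {q : ℝ} (hq : 2 ≤ q) (b : ℕ) (r : ℤ) (hr : 0 ≤ r) :
    ∀ s t : ℕ, s ≤ t → S q b s r ≤ S q b t r := by
  intro s t hst
  induction t, hst using Nat.le_induction with
  | base => exact le_refl _
  | succ t hst ih => exact le_trans ih (S_mono hq b t r hr)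

end Stmt11Aux

open Stmt11Aux in
/-- With `P_t(r) = Σ_{i=r}^t Q_{q,b,i}(t)` the probability that a sum of `t` random outer
products has rank at least `r`: `P_t(r) ≥ P_r(r)` for all `t ≥ r`. -/
theorem stmt11 (q : ℝ) (hq : 2 ≤ q) (b r : ℕ) (hr : 1 ≤ r) (hrb : r ≤ b) :
    ∀ t : ℕ, r ≤ t →
      ∑ i ∈ Finset.Icc r r, Qfun q b r (i : ℤ) ≤ ∑ i ∈ Finset.Icc r t, Qfun q b t (i : ℤ) := by
  intro t hrt
  have cast_sum : ∀ (u : ℕ) (a c : ℕ),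
      ∑ i ∈ Finset.Icc a c, Qfun q b u (i : ℤ) = ∑ j ∈ Finset.Icc (a:ℤ) (c:ℤ), Qfun q b u j := by
    intro u a c
    rw [show Finset.Icc (a:ℤ) (c:ℤ) = (Finset.Icc a c).map ⟨(Nat.cast : ℕ → ℤ), Nat.cast_injective⟩ by
      ext x
      simp only [Finset.mem_map, Finset.mem_Icc, Function.Embedding.coeFn_mk]
      constructor
      · intro hx
        exact ⟨x.toNat, ⟨by omega, by omega⟩, by omega⟩
      · rintro ⟨y, hy, rfl⟩
        omega]
    rw [Finset.sum_map]
    rfl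
  rw [cast_sum, cast_sum]
  have hS : ∀ (u : ℕ) (c : ℕ), u ≤ c →
      ∑ j ∈ Finset.Icc (r:ℤ) (c:ℤ), Qfun q b u j = S q b u (r:ℤ) := by
    intro u c huc
    have h1 : ∑ j ∈ Finset.Icc (r:ℤ) (c:ℤ), Qfun q b u j
        = ∑ j ∈ Finset.Icc (r:ℤ) (max (c:ℤ) (b:ℤ)), Qfun q b u j := by
      apply Finset.sum_subset (Finset.Icc_subset_Icc_right (le_max_left _ _))
      intro x hx hnx
      simp only [Finset.mem_Icc] at hx hnx
      exact Qfun_eq_zero q b u x (by omega)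
    have h2 : S q b u (r:ℤ)
        = ∑ j ∈ Finset.Icc (r:ℤ) (max (c:ℤ) (b:ℤ)), Qfun q b u j := by
      rw [S]
      apply Finset.sum_subset (Finset.Icc_subset_Icc_right (le_max_right _ _))
      intro x hx hnx
      simp only [Finset.mem_Icc] at hx hnx
      exact Qfun_eq_zero q b u x (by omega)
    rw [h1, h2]
  rw [hS r r le_rfl, hS t t le_rfl]
  exact S_mono' hq b (r:ℤ) (by positivity) r t hrt
end

section
/- Let u_1,...,u_t, v_1,...,v_t be independent uniformly random vectors in F_q^b and let A = Σ_{i=1}^t u_i v_i^T. Conditioned on rank(A) = r with r < b, the probability that rank(A + u v^T) = r + 1 for fresh uniform u, v ∈ F_q^b is U_r = (1 − q^{−(b−r)})^2, and the probability that rank(A + u v^T) = r − 1 is D_r = q^{r−1}(q^r − 1)/q^{2b}. -/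
open Matrix

section Aux
variable {F : Type*} [Field F] [Fintype F] [DecidableEq F] {b : ℕ}

lemma mulVec_vecMulVec (u v x : Fin b → F) :
    (vecMulVec u v).mulVec x = (v ⬝ᵥ x) • u := by
  funext i
  simp [vecMulVec_apply, mulVec, dotProduct, Finset.mul_sum, mul_comm, mul_assoc, mul_left_comm]

lemma mul_vecMulVec (A : Matrix (Fin b) (Fin b) F) (x v : Fin b → F) :
    A * vecMulVec x v = vecMulVec (A.mulVec x) v := by
  ext i j
  simp [vecMulVec_apply, mul_apply, mulVec, dotProduct, Finset.sum_mul, mul_assoc]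

/-- duality: membership in row space iff orthogonal to kernel -/
lemma mem_range_transpose_iff (A : Matrix (Fin b) (Fin b) F) (v : Fin b → F) :
    v ∈ LinearMap.range Aᵀ.mulVecLin ↔ ∀ x, A.mulVec x = 0 → v ⬝ᵥ x = 0 := by
  constructor
  · rintro ⟨w, rfl⟩ x hx
    simp only [mulVecLin_apply, mulVec_transpose]
    rw [← Matrix.dotProduct_mulVec, hx, dotProduct_zero]
  · intro h
    set f := A.mulVecLin with hf
    -- the functional x ↦ v ⬝ᵥ x
    set ℓ : (Fin b → F) →ₗ[F] F := {
      toFun := fun x => v ⬝ᵥ x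
      map_add' := fun a c => dotProduct_add v a c
      map_smul' := fun m a => by simp [dotProduct_smul] } with hℓ
    have hker : LinearMap.ker f ≤ LinearMap.ker ℓ := by
      intro x hx
      simp only [LinearMap.mem_ker] at hx ⊢
      exact h x hx
    set φbar : ((Fin b → F) ⧸ LinearMap.ker f) →ₗ[F] F :=
      (LinearMap.ker f).liftQ ℓ hker with hφbar
    set φ : Module.Dual F (LinearMap.range f) :=
      φbar ∘ₗ (f.quotKerEquivRange.symm : LinearMap.range f →ₗ[F] _) with hφ
    obtain ⟨ψ, hψ⟩ := Subspace.dualRestrict_surjective (W := LinearMap.range f) φ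
    have key : ∀ x, ψ (f x) = v ⬝ᵥ x := by
      intro x
      have h1 : ψ (f x) = φ ⟨f x, LinearMap.mem_range_self f x⟩ := by
        rw [← hψ]; rfl
      rw [h1, hφ]
      simp only [LinearMap.coe_comp, Function.comp_apply, LinearEquiv.coe_coe]
      rw [f.quotKerEquivRange_symm_apply_image x]
      simp [φbar, Submodule.liftQ_apply, ℓ]
    set w : Fin b → F := fun i => ψ (fun j => if i = j then 1 else 0) with hw
    have hψw : ∀ x, ψ x = w ⬝ᵥ x := by
      intro x
      rw [LinearMap.pi_apply_eq_sum_univ ψ x]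
      simp [dotProduct, w, mul_comm, smul_eq_mul]
    refine ⟨w, ?_⟩
    funext j
    have hcol : f (fun i => if j = i then 1 else 0) = fun i => A i j := by
      funext i
      simp [f, mulVecLin_apply, mulVec, dotProduct]
    have := key (fun i => if j = i then 1 else 0)
    rw [hcol, hψw] at this
    have hvj : v ⬝ᵥ (fun i => if j = i then 1 else 0) = v j := by
      simp [dotProduct]
    rw [hvj] at this
    have hfin : (Aᵀ.mulVecLin w) j = w ⬝ᵥ (fun i => A i j) := by
      simp [mulVecLin_apply, mulVec_transpose, vecMul]
    rw [hfin, this]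

end Aux

section Aux2
variable {F : Type*} [Field F] [Fintype F] [DecidableEq F] {b : ℕ}

/-- the dot-product functional -/
def dotL (v : Fin b → F) : (Fin b → F) →ₗ[F] F where
  toFun := fun x => v ⬝ᵥ x
  map_add' := fun a c => dotProduct_add v a c
  map_smul' := fun m a => by simp

@[simp] lemma dotL_apply (v x : Fin b → F) : dotL v x = v ⬝ᵥ x := rfl

lemma finrank_map_add (f : (Fin b → F) →ₗ[F] (Fin b → F)) (K : Submodule F (Fin b → F)) :
    Module.finrank F (K.map f) + Module.finrank F ↥(K ⊓ LinearMap.ker f) = Module.finrank F K := by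
  have h := LinearMap.finrank_range_add_finrank_ker (f.domRestrict K)
  rw [LinearMap.range_domRestrict, LinearMap.ker_domRestrict] at h
  rwa [← Submodule.map_comap_subtype, Submodule.finrank_map_subtype_eq]

lemma range_one_add_vecMulVec (x v : Fin b → F) (hvx : v ⬝ᵥ x = -1) :
    LinearMap.range (1 + vecMulVec x v).mulVecLin = LinearMap.ker (dotL v) := by
  ext z
  constructor
  · rintro ⟨y, rfl⟩
    simp only [LinearMap.mem_ker, dotL_apply, mulVecLin_apply, add_mulVec, one_mulVec,
      mulVec_vecMulVec, dotProduct_add, dotProduct_smul, smul_eq_mul, hvx]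
    ring
  · intro hz
    simp only [LinearMap.mem_ker, dotL_apply] at hz
    exact ⟨z, by simp [add_mulVec, one_mulVec, mulVec_vecMulVec, hz]⟩

lemma finrank_ker_dotL (v : Fin b → F) (hv : v ≠ 0) :
    Module.finrank F ↥(LinearMap.ker (dotL v)) + 1 = b := by
  have hsurj : Function.Surjective (dotL v) := by
    obtain ⟨i, hi⟩ : ∃ i, v i ≠ 0 := by
      by_contra h; push_neg at h; exact hv (funext h)
    intro a
    refine ⟨Pi.single i (a / v i), ?_⟩
    simp [dotL_apply, dotProduct, Pi.single_apply]
    field_simp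
  have h := LinearMap.finrank_range_add_finrank_ker (dotL v)
  rw [LinearMap.range_eq_top.mpr hsurj] at h
  simpa [add_comm] using h

/-- central rank computation for M * (1 + x vᵀ) when v ⬝ x = -1 -/
lemma rank_mul_one_add (M : Matrix (Fin b) (Fin b) F) (x v : Fin b → F) (hvx : v ⬝ᵥ x = -1) :
    (M * (1 + vecMulVec x v)).rank
      + Module.finrank F ↥(LinearMap.ker (dotL v) ⊓ LinearMap.ker M.mulVecLin) + 1 = b := by
  have hv : v ≠ 0 := by
    rintro rfl; simp at hvx
  rw [Matrix.rank, mulVecLin_mul, LinearMap.range_comp, range_one_add_vecMulVec x v hvx]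
  rw [finrank_map_add M.mulVecLin (LinearMap.ker (dotL v))]
  exact finrank_ker_dotL v hv

end Aux2

section Aux3
variable {F : Type*} [Field F] [Fintype F] [DecidableEq F] {b : ℕ}

lemma finrank_inf_ker_dotL (K : Submodule F (Fin b → F)) (v : Fin b → F)
    (h : ∃ x ∈ K, v ⬝ᵥ x ≠ 0) :
    Module.finrank F ↥(LinearMap.ker (dotL v) ⊓ K) + 1 = Module.finrank F K := by
  obtain ⟨x₀, hx₀K, hx₀⟩ := h
  have hsurj : Function.Surjective ((dotL v).domRestrict K) := by
    intro a
    refine ⟨⟨(a / (v ⬝ᵥ x₀)) • x₀, K.smul_mem _ hx₀K⟩, ?_⟩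
    simp only [LinearMap.domRestrict_apply, dotL_apply, dotProduct_smul, smul_eq_mul]
    field_simp
  have h1 := LinearMap.finrank_range_add_finrank_ker ((dotL v).domRestrict K)
  rw [LinearMap.range_eq_top.mpr hsurj, LinearMap.ker_domRestrict] at h1
  have h2 : Module.finrank F ↥((LinearMap.ker (dotL v)).comap K.subtype)
      = Module.finrank F ↥(LinearMap.ker (dotL v) ⊓ K) := by
    rw [← Submodule.finrank_map_subtype_eq K, Submodule.map_comap_subtype, inf_comm]
  rw [h2] at h1
  simpa [add_comm] using h1

lemma rank_nullity_mat (M : Matrix (Fin b) (Fin b) F) :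
    M.rank + Module.finrank F ↥(LinearMap.ker M.mulVecLin) = b := by
  have h := LinearMap.finrank_range_add_finrank_ker M.mulVecLin
  rwa [Module.finrank_fintype_fun_eq_card, Fintype.card_fin] at h

lemma factor_outer (M : Matrix (Fin b) (Fin b) F) (x z : Fin b → F) :
    M + vecMulVec (M.mulVec x) z = M * (1 + vecMulVec x z) := by
  rw [mul_add, mul_one, _root_.mul_vecMulVec]

lemma det_one_add_outer (x z : Fin b → F) :
    (1 + vecMulVec x z).det = 1 + z ⬝ᵥ x := by
  rw [vecMulVec_eq (Fin 1), det_one_add_replicateCol_mul_replicateRow]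

/-- case: unit factor, rank unchanged -/
lemma rank_case_unit (M : Matrix (Fin b) (Fin b) F) (x z : Fin b → F)
    (h : 1 + z ⬝ᵥ x ≠ 0) :
    (M + vecMulVec (M.mulVec x) z).rank = M.rank := by
  rw [factor_outer]
  exact Matrix.rank_mul_eq_left_of_isUnit_det _ M
    (by rw [det_one_add_outer]; exact isUnit_iff_ne_zero.mpr h)

/-- case: z ⬝ x = -1 and z in row space: rank drops by one -/
lemma rank_case_drop (M : Matrix (Fin b) (Fin b) F) (x z : Fin b → F)
    (hzx : z ⬝ᵥ x = -1) (hz : z ∈ LinearMap.range Mᵀ.mulVecLin) :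
    (M + vecMulVec (M.mulVec x) z).rank + 1 = M.rank := by
  rw [factor_outer]
  have h1 := rank_mul_one_add M x z hzx
  have hle : LinearMap.ker M.mulVecLin ≤ LinearMap.ker (dotL z) := by
    intro y hy
    simp only [LinearMap.mem_ker, mulVecLin_apply] at hy ⊢
    exact (mem_range_transpose_iff M z).mp hz y hy
  rw [inf_eq_right.mpr hle] at h1
  have h2 := rank_nullity_mat M
  omega

/-- case: z ⬝ x = -1 but z not in row space: rank unchanged -/
lemma rank_case_same (M : Matrix (Fin b) (Fin b) F) (x z : Fin b → F)
    (hzx : z ⬝ᵥ x = -1) (hz : z ∉ LinearMap.range Mᵀ.mulVecLin) :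
    (M + vecMulVec (M.mulVec x) z).rank = M.rank := by
  rw [factor_outer]
  have h1 := rank_mul_one_add M x z hzx
  obtain ⟨y, hy1, hy2⟩ : ∃ y, M.mulVec y = 0 ∧ ¬ z ⬝ᵥ y = 0 := by
    by_contra h
    push_neg at h
    exact hz ((mem_range_transpose_iff M z).mpr fun y hy => h y hy)
  have h3 := finrank_inf_ker_dotL (LinearMap.ker M.mulVecLin) z
    ⟨y, by simpa [LinearMap.mem_ker] using hy1, hy2⟩
  have h2 := rank_nullity_mat M
  omega

/-- case: column and row both new: rank increases -/
lemma rank_case_up (M : Matrix (Fin b) (Fin b) F) (u z : Fin b → F)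
    (hu : u ∉ LinearMap.range M.mulVecLin) (hz : z ∉ LinearMap.range Mᵀ.mulVecLin) :
    (M + vecMulVec u z).rank = M.rank + 1 := by
  obtain ⟨y, hy1, hy2⟩ : ∃ y, M.mulVec y = 0 ∧ ¬ z ⬝ᵥ y = 0 := by
    by_contra h
    push_neg at h
    exact hz ((mem_range_transpose_iff M z).mpr fun y hy => h y hy)
  have hrange : LinearMap.range (M + vecMulVec u z).mulVecLin
      = LinearMap.range M.mulVecLin ⊔ Submodule.span F {u} := by
    apply le_antisymm
    · rintro _ ⟨w, rfl⟩
      simp only [mulVecLin_apply, add_mulVec, mulVec_vecMulVec]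
      exact Submodule.add_mem_sup (LinearMap.mem_range_self _ w)
        (Submodule.smul_mem _ _ (Submodule.mem_span_singleton_self u))
    · have humem : u ∈ LinearMap.range (M + vecMulVec u z).mulVecLin := by
        refine ⟨(z ⬝ᵥ y)⁻¹ • y, ?_⟩
        simp only [mulVecLin_apply, add_mulVec, mulVec_vecMulVec, mulVec_smul, hy1, smul_zero,
          zero_add, dotProduct_smul, smul_eq_mul, smul_smul]
        rw [mul_comm, mul_inv_cancel₀ hy2, one_smul]
      refine sup_le ?_ ?_
      · rintro _ ⟨w, rfl⟩
        have : M.mulVec w = (M + vecMulVec u z).mulVec w - (z ⬝ᵥ w) • u := by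
          simp [add_mulVec, mulVec_vecMulVec]
        rw [mulVecLin_apply, this]
        exact Submodule.sub_mem _ (LinearMap.mem_range_self _ w)
          (Submodule.smul_mem _ _ humem)
      · rwa [Submodule.span_singleton_le_iff_mem]
  have hu0 : u ≠ 0 := fun h => hu (h ▸ Submodule.zero_mem _)
  have hdisj : LinearMap.range M.mulVecLin ⊓ Submodule.span F {u} = ⊥ := by
    rw [Submodule.eq_bot_iff]
    rintro c hc
    obtain ⟨hc1, hc2⟩ := Submodule.mem_inf.mp hc
    obtain ⟨a, rfl⟩ := Submodule.mem_span_singleton.mp hc2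
    rcases eq_or_ne a 0 with rfl | ha
    · simp
    · exact absurd ((Submodule.smul_mem_iff _ ha).mp hc1) hu
  rw [Matrix.rank, hrange]
  have := Submodule.finrank_sup_add_finrank_inf_eq
    (LinearMap.range M.mulVecLin) (Submodule.span F {u})
  rw [hdisj, finrank_span_singleton hu0] at this
  simp only [finrank_bot, add_zero] at this
  rw [this]
  rfl

end Aux3

section Aux4
variable {F : Type*} [Field F] [Fintype F] [DecidableEq F] {b : ℕ}

lemma vecMulVec_transpose' (u v : Fin b → F) : (vecMulVec u v)ᵀ = vecMulVec v u := by
  ext i j; simp [vecMulVec_apply, transpose_apply, mul_comm]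

/-- trichotomy of rank values -/
lemma rank_trichotomy (A : Matrix (Fin b) (Fin b) F) (r : ℕ) (hrank : A.rank = r)
    (u v : Fin b → F) :
    (((A + vecMulVec u v).rank : ℤ) = (r : ℤ) + 1
        ↔ (u ∉ LinearMap.range A.mulVecLin ∧ v ∉ LinearMap.range Aᵀ.mulVecLin))
    ∧ (((A + vecMulVec u v).rank : ℤ) = (r : ℤ) - 1
        ↔ (v ∈ LinearMap.range Aᵀ.mulVecLin ∧ ∃ x, A.mulVec x = u ∧ v ⬝ᵥ x = -1)) := by
  by_cases hu : u ∈ LinearMap.range A.mulVecLin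
  · obtain ⟨x, hx⟩ := hu
    simp only [mulVecLin_apply] at hx
    subst hx
    have humem : A.mulVec x ∈ LinearMap.range A.mulVecLin := LinearMap.mem_range_self _ x
    by_cases hvx : v ⬝ᵥ x = -1
    · by_cases hv : v ∈ LinearMap.range Aᵀ.mulVecLin
      · have hd := rank_case_drop A x v hvx hv
        rw [hrank] at hd
        constructor
        · constructor
          · intro h; omega
          · rintro ⟨h1, -⟩; exact absurd humem h1
        · constructor
          · intro _; exact ⟨hv, x, rfl, hvx⟩
          · intro _; omega
      · have hs := rank_case_same A x v hvx hv
        rw [hrank] at hs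
        constructor
        · constructor
          · intro h; omega
          · rintro ⟨h1, -⟩; exact absurd humem h1
        · constructor
          · intro h; omega
          · rintro ⟨hv', -⟩; exact absurd hv' hv
    · have h1 : 1 + v ⬝ᵥ x ≠ 0 := by
        intro h; exact hvx (eq_neg_of_add_eq_zero_right h)
      have hs := rank_case_unit A x v h1
      rw [hrank] at hs
      constructor
      · constructor
        · intro h; omega
        · rintro ⟨hc, -⟩; exact absurd humem hc
      · constructor
        · intro h; omega
        · rintro ⟨hv', x', hx', hvx'⟩
          exfalso
          apply hvx
          have hker : A.mulVec (x - x') = 0 := by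
            rw [mulVec_sub, hx', sub_eq_zero]
          have := (mem_range_transpose_iff A v).mp hv' (x - x') hker
          rw [dotProduct_sub, hvx', sub_neg_eq_add] at this
          linear_combination this
  · by_cases hv : v ∈ LinearMap.range Aᵀ.mulVecLin
    · obtain ⟨y, hy⟩ := hv
      simp only [mulVecLin_apply] at hy
      have ht : (A + vecMulVec u v).rank = (Aᵀ + vecMulVec (Aᵀ.mulVec y) u).rank := by
        rw [← rank_transpose (A + vecMulVec u v), transpose_add, vecMulVec_transpose', hy]
      have hu' : u ∉ LinearMap.range Aᵀᵀ.mulVecLin := by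
        rwa [transpose_transpose]
      have hs : (A + vecMulVec u v).rank = r := by
        rw [ht]
        by_cases huy : u ⬝ᵥ y = -1
        · rw [rank_case_same Aᵀ y u huy hu', rank_transpose, hrank]
        · have h1 : 1 + u ⬝ᵥ y ≠ 0 := by
            intro h; exact huy (eq_neg_of_add_eq_zero_right h)
          rw [rank_case_unit Aᵀ y u h1, rank_transpose, hrank]
      constructor
      · constructor
        · intro h; omega
        · rintro ⟨-, hc⟩; exact absurd ⟨y, by rw [mulVecLin_apply]; exact hy⟩ hc
      · constructor
        · intro h; omega
        · rintro ⟨-, x', hx', -⟩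
          exact absurd ⟨x', by rw [mulVecLin_apply]; exact hx'⟩ hu
    · have hs := rank_case_up A u v hu hv
      rw [hrank] at hs
      constructor
      · constructor
        · intro _; exact ⟨hu, hv⟩
        · intro _; omega
      · constructor
        · intro h; omega
        · rintro ⟨hv', -⟩; exact absurd hv' hv

end Aux4

section Aux5
variable {F : Type*} [Field F] [Fintype F] [DecidableEq F] {b : ℕ}

lemma card_submodule (W : Submodule F (Fin b → F)) :
    Nat.card {u : Fin b → F // u ∈ W} = Fintype.card F ^ (Module.finrank F W) := by
  classical
  rw [Nat.card_eq_fintype_card]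
  exact Module.card_eq_pow_finrank (K := F) (V := {u : Fin b → F // u ∈ W})

lemma card_not_mem (W : Submodule F (Fin b → F)) :
    Nat.card {u : Fin b → F // u ∉ W}
      = Fintype.card F ^ b - Fintype.card F ^ (Module.finrank F W) := by
  classical
  rw [Nat.card_eq_fintype_card, Fintype.card_subtype_compl, ← card_submodule W,
    Nat.card_eq_fintype_card]
  congr 1
  rw [Fintype.card_fun, Fintype.card_fin]

lemma card_nonzero (W : Submodule F (Fin b → F)) :
    Nat.card {u : Fin b → F // u ∈ W ∧ u ≠ 0}
      = Fintype.card F ^ (Module.finrank F W) - 1 := by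
  classical
  have e : {u : Fin b → F // u ∈ W ∧ u ≠ 0} ≃ {c : ↥W // ¬ c = 0} :=
    (Equiv.subtypeSubtypeEquivSubtypeInter (· ∈ W) (· ≠ 0)).symm.trans
      (Equiv.subtypeEquivRight (fun c => by
        simp [Ne, ZeroMemClass.coe_eq_zero]))
  rw [Nat.card_congr e, Nat.card_eq_fintype_card, Fintype.card_subtype_compl,
    Fintype.card_subtype_eq]
  congr 1
  rw [← Nat.card_eq_fintype_card, card_submodule W]

lemma card_fiber (R' : Submodule F (Fin b → F)) (x₀ : Fin b → F)
    (hex : ∃ w ∈ R', w ⬝ᵥ x₀ ≠ 0) :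
    Nat.card {v : Fin b → F // v ∈ R' ∧ v ⬝ᵥ x₀ = -1}
      = Fintype.card F ^ (Module.finrank F R' - 1) := by
  classical
  set ℓ : ↥R' →ₗ[F] F := (dotL x₀).domRestrict R' with hℓ
  have hℓ_apply : ∀ c : ↥R', ℓ c = (c : Fin b → F) ⬝ᵥ x₀ := by
    intro c; simp [ℓ, dotProduct_comm]
  have hsurj : Function.Surjective ℓ := by
    obtain ⟨w, hwR, hw⟩ := hex
    intro a
    refine ⟨⟨(a / (w ⬝ᵥ x₀)) • w, R'.smul_mem _ hwR⟩, ?_⟩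
    rw [hℓ_apply]
    simp only [Submodule.coe_smul, smul_dotProduct, smul_eq_mul]
    field_simp
  obtain ⟨v₁, hv₁⟩ := hsurj (-1)
  have e1 : {v : Fin b → F // v ∈ R' ∧ v ⬝ᵥ x₀ = -1} ≃ {c : ↥R' // ℓ c = -1} :=
    (Equiv.subtypeSubtypeEquivSubtypeInter (· ∈ R') (· ⬝ᵥ x₀ = -1)).symm.trans
      (Equiv.subtypeEquivRight (fun c => by rw [hℓ_apply]))
  have e2 : {c : ↥R' // ℓ c = -1} ≃ ↥(LinearMap.ker ℓ) :=
    { toFun := fun c => ⟨c.1 - v₁, by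
        simp [LinearMap.mem_ker, map_sub, c.2, hv₁]⟩
      invFun := fun k => ⟨k.1 + v₁, by
        have hk := k.2
        simp only [LinearMap.mem_ker] at hk
        simp [map_add, hk, hv₁]⟩
      left_inv := fun c => by apply Subtype.ext; simp
      right_inv := fun k => by apply Subtype.ext; simp }
  rw [Nat.card_congr (e1.trans e2)]
  rw [Nat.card_eq_fintype_card, Module.card_eq_pow_finrank (K := F) (V := ↥(LinearMap.ker ℓ))]
  congr 1
  have h1 := LinearMap.finrank_range_add_finrank_ker ℓ
  rw [LinearMap.range_eq_top.mpr hsurj, finrank_top, Module.finrank_self] at h1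
  omega

/-- split a subtype of a product into a sigma type -/
def prodSubtypeSigma {α β : Type*} (Q : α → β → Prop) :
    {p : α × β // Q p.1 p.2} ≃ Σ a : α, {y : β // Q a y} where
  toFun := fun s => ⟨s.1.1, s.1.2, s.2⟩
  invFun := fun t => ⟨(t.1, t.2.1), t.2.2⟩
  left_inv := fun s => rfl
  right_inv := fun t => rfl

end Aux5

/-- For a fixed `b×b` matrix `A` of rank `r < b` over `F_q` and independent uniform
`u, v ∈ F_q^b`: `P(rank(A + uvᵀ) = r+1) = (1 − q^{r−b})²` and
`P(rank(A + uvᵀ) = r−1) = q^{r−1}(q^r − 1)/q^{2b}`. -/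
theorem stmt12 {F : Type*} [Field F] [Fintype F] [DecidableEq F] (b : ℕ) (hb : 1 ≤ b)
    (A : Matrix (Fin b) (Fin b) F) (r : ℕ) (hrank : A.rank = r) (hrb : r < b) :
    ((Nat.card {p : (Fin b → F) × (Fin b → F) //
          ((A + Matrix.vecMulVec p.1 p.2).rank : ℤ) = (r : ℤ) + 1} : ℝ)
        / (Fintype.card F : ℝ) ^ (2 * b)
      = (1 - (Fintype.card F : ℝ) ^ ((r : ℤ) - (b : ℤ))) ^ 2)
    ∧ ((Nat.card {p : (Fin b → F) × (Fin b → F) //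
          ((A + Matrix.vecMulVec p.1 p.2).rank : ℤ) = (r : ℤ) - 1} : ℝ)
        / (Fintype.card F : ℝ) ^ (2 * b)
      = (Fintype.card F : ℝ) ^ ((r : ℤ) - 1) * ((Fintype.card F : ℝ) ^ (r : ℤ) - 1)
          / (Fintype.card F : ℝ) ^ (2 * b)) := by
  classical
  have hq1 : 1 < Fintype.card F := Fintype.one_lt_card
  have hq0 : (0 : ℝ) < (Fintype.card F : ℝ) := by positivity
  have hqne : (Fintype.card F : ℝ) ≠ 0 := ne_of_gt hq0
  have hfinC : Module.finrank F ↥(LinearMap.range A.mulVecLin) = r := hrank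
  have hfinR : Module.finrank F ↥(LinearMap.range Aᵀ.mulVecLin) = r := by
    have : Aᵀ.rank = r := by rw [rank_transpose, hrank]
    exact this
  have htri := rank_trichotomy A r hrank
  constructor
  · -- rank increases
    have hcount : Nat.card {p : (Fin b → F) × (Fin b → F) //
        ((A + Matrix.vecMulVec p.1 p.2).rank : ℤ) = (r : ℤ) + 1}
        = (Fintype.card F ^ b - Fintype.card F ^ r)
          * (Fintype.card F ^ b - Fintype.card F ^ r) := by
      calc Nat.card {p : (Fin b → F) × (Fin b → F) //
            ((A + Matrix.vecMulVec p.1 p.2).rank : ℤ) = (r : ℤ) + 1}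
          = Nat.card {p : (Fin b → F) × (Fin b → F) //
              p.1 ∉ LinearMap.range A.mulVecLin ∧ p.2 ∉ LinearMap.range Aᵀ.mulVecLin} :=
            Nat.card_congr (Equiv.subtypeEquivRight (fun p => (htri p.1 p.2).1))
        _ = Nat.card ({u : Fin b → F // u ∉ LinearMap.range A.mulVecLin}
              × {v : Fin b → F // v ∉ LinearMap.range Aᵀ.mulVecLin}) :=
            Nat.card_congr (Equiv.subtypeProdEquivProd (p := fun u : Fin b → F => u ∉ LinearMap.range A.mulVecLin) (q := fun v : Fin b → F => v ∉ LinearMap.range Aᵀ.mulVecLin))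
        _ = Nat.card {u : Fin b → F // u ∉ LinearMap.range A.mulVecLin}
              * Nat.card {v : Fin b → F // v ∉ LinearMap.range Aᵀ.mulVecLin} :=
            Nat.card_prod _ _
        _ = (Fintype.card F ^ b - Fintype.card F ^ r)
              * (Fintype.card F ^ b - Fintype.card F ^ r) := by
            rw [card_not_mem _, card_not_mem _, hfinC, hfinR]
    rw [hcount]
    have hle : Fintype.card F ^ r ≤ Fintype.card F ^ b :=
      Nat.pow_le_pow_right (le_of_lt hq1) hrb.le
    have hzp : (Fintype.card F : ℝ) ^ ((r : ℤ) - (b : ℤ))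
        = (Fintype.card F : ℝ) ^ r / (Fintype.card F : ℝ) ^ b := by
      rw [zpow_sub₀ hqne, zpow_natCast, zpow_natCast]
    rw [hzp]
    push_cast [Nat.cast_sub hle]
    rw [two_mul, pow_add]
    have hbne : (Fintype.card F : ℝ) ^ b ≠ 0 := by positivity
    field_simp
  · -- rank decreases
    have hcount : Nat.card {p : (Fin b → F) × (Fin b → F) //
        ((A + Matrix.vecMulVec p.1 p.2).rank : ℤ) = (r : ℤ) - 1}
        = (Fintype.card F ^ r - 1) * Fintype.card F ^ (r - 1) := by
      have step0 : Nat.card {p : (Fin b → F) × (Fin b → F) //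
            ((A + Matrix.vecMulVec p.1 p.2).rank : ℤ) = (r : ℤ) - 1}
          = Nat.card {p : (Fin b → F) × (Fin b → F) //
              p.2 ∈ LinearMap.range Aᵀ.mulVecLin ∧ ∃ x, A.mulVec x = p.1 ∧ p.2 ⬝ᵥ x = -1} :=
        Nat.card_congr (Equiv.subtypeEquivRight (fun p => (htri p.1 p.2).2))
      have step1 : Nat.card {p : (Fin b → F) × (Fin b → F) //
              p.2 ∈ LinearMap.range Aᵀ.mulVecLin ∧ ∃ x, A.mulVec x = p.1 ∧ p.2 ⬝ᵥ x = -1}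
          = Nat.card (Σ u : Fin b → F, {v : Fin b → F //
              v ∈ LinearMap.range Aᵀ.mulVecLin ∧ ∃ x, A.mulVec x = u ∧ v ⬝ᵥ x = -1}) :=
        Nat.card_congr (prodSubtypeSigma (fun (u v : Fin b → F) =>
          v ∈ LinearMap.range Aᵀ.mulVecLin ∧ ∃ x, A.mulVec x = u ∧ v ⬝ᵥ x = -1))
      rw [step0, step1, Nat.card_eq_fintype_card, Fintype.card_sigma]
      have hNu : ∀ u : Fin b → F,
          Fintype.card {v : Fin b → F //
            v ∈ LinearMap.range Aᵀ.mulVecLin ∧ ∃ x, A.mulVec x = u ∧ v ⬝ᵥ x = -1}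
          = if u ∈ LinearMap.range A.mulVecLin ∧ u ≠ 0
              then Fintype.card F ^ (r - 1) else 0 := by
        intro u
        by_cases hu : u ∈ LinearMap.range A.mulVecLin ∧ u ≠ 0
        · obtain ⟨⟨x₀, hx₀⟩, hu0⟩ := hu
          rw [mulVecLin_apply] at hx₀
          rw [if_pos ⟨⟨x₀, by rw [mulVecLin_apply]; exact hx₀⟩, hu0⟩]
          have hex : ∃ w ∈ LinearMap.range Aᵀ.mulVecLin, w ⬝ᵥ x₀ ≠ 0 := by
            by_contra hall
            push_neg at hall
            apply hu0
            rw [← hx₀]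
            funext i
            have h1 := hall (Aᵀ.mulVec (Pi.single i 1))
              ⟨Pi.single i 1, by rw [mulVecLin_apply]⟩
            rw [mulVec_transpose, ← Matrix.dotProduct_mulVec] at h1
            simpa [dotProduct, Pi.single_apply] using h1
          have hiff : ∀ v : Fin b → F,
              (v ∈ LinearMap.range Aᵀ.mulVecLin ∧ ∃ x, A.mulVec x = u ∧ v ⬝ᵥ x = -1)
              ↔ (v ∈ LinearMap.range Aᵀ.mulVecLin ∧ v ⬝ᵥ x₀ = -1) := by
            intro v
            constructor
            · rintro ⟨hvR, x, hx, hvx⟩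
              refine ⟨hvR, ?_⟩
              have hker : A.mulVec (x₀ - x) = 0 := by
                rw [mulVec_sub, hx, hx₀, sub_self]
              have h0 := (mem_range_transpose_iff A v).mp hvR _ hker
              rw [dotProduct_sub] at h0
              linear_combination h0 + hvx
            · rintro ⟨hvR, h⟩
              exact ⟨hvR, x₀, hx₀, h⟩
          calc Fintype.card {v : Fin b → F //
                v ∈ LinearMap.range Aᵀ.mulVecLin ∧ ∃ x, A.mulVec x = u ∧ v ⬝ᵥ x = -1}
              = Nat.card {v : Fin b → F //
                v ∈ LinearMap.range Aᵀ.mulVecLin ∧ ∃ x, A.mulVec x = u ∧ v ⬝ᵥ x = -1} :=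
                (Nat.card_eq_fintype_card).symm
            _ = Nat.card {v : Fin b → F //
                v ∈ LinearMap.range Aᵀ.mulVecLin ∧ v ⬝ᵥ x₀ = -1} :=
                Nat.card_congr (Equiv.subtypeEquivRight hiff)
            _ = Fintype.card F ^ (r - 1) := by
                rw [card_fiber _ x₀ hex, hfinR]
        · rw [if_neg hu]
          push_neg at hu
          rw [Fintype.card_eq_zero_iff]
          refine ⟨?_⟩
          rintro ⟨v, hvR, x, hx, hvx⟩
          have huC : u ∈ LinearMap.range A.mulVecLin :=
            ⟨x, by rw [mulVecLin_apply]; exact hx⟩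
          have hu0 := hu huC
          rw [hu0] at hx
          have := (mem_range_transpose_iff A v).mp hvR x hx
          rw [this] at hvx
          exact one_ne_zero (neg_eq_zero.mp hvx.symm)
      calc ∑ u : Fin b → F, Fintype.card {v : Fin b → F //
            v ∈ LinearMap.range Aᵀ.mulVecLin ∧ ∃ x, A.mulVec x = u ∧ v ⬝ᵥ x = -1}
          = ∑ u : Fin b → F, (if u ∈ LinearMap.range A.mulVecLin ∧ u ≠ 0
              then Fintype.card F ^ (r - 1) else 0) := by
            exact Finset.sum_congr rfl (fun u _ => hNu u)
        _ = ∑ u ∈ Finset.univ.filter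
              (fun u => u ∈ LinearMap.range A.mulVecLin ∧ u ≠ 0),
              Fintype.card F ^ (r - 1) := (Finset.sum_filter _ _).symm
        _ = (Finset.univ.filter
              (fun u => u ∈ LinearMap.range A.mulVecLin ∧ u ≠ 0)).card
              * Fintype.card F ^ (r - 1) := by
            rw [Finset.sum_const, smul_eq_mul]
        _ = (Fintype.card F ^ r - 1) * Fintype.card F ^ (r - 1) := by
            rw [← Fintype.card_subtype, ← Nat.card_eq_fintype_card,
              card_nonzero _, hfinC]
    rw [hcount]
    rcases Nat.eq_zero_or_pos r with rfl | hr
    · simp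
    · have h1le : 1 ≤ Fintype.card F ^ r := Nat.one_le_pow _ _ (by omega)
      push_cast [Nat.cast_sub h1le]
      have hz1 : (Fintype.card F : ℝ) ^ ((r : ℤ) - 1)
          = (Fintype.card F : ℝ) ^ (r - 1) := by
        rw [← zpow_natCast (Fintype.card F : ℝ) (r - 1)]
        congr 1
        omega
      have hz2 : (Fintype.card F : ℝ) ^ (r : ℤ) = (Fintype.card F : ℝ) ^ r :=
        zpow_natCast _ _
      rw [hz1, hz2]
      ring
end

section
/- For any real q ≥ 2 and integers b > r > 0, the infinite product Π_{d=1}^∞ (1 − q^{−d(b−r+1)})^{2 r q^d} is strictly greater than 1 − 2r/(q^{b−r} − 1). -/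
open Finset in
/-- Finite Weierstrass product inequality. -/
lemma weier_aux (a : ℕ → ℝ) (h0 : ∀ d, 0 ≤ a d) (h1 : ∀ d, a d ≤ 1) (F : Finset ℕ) :
    1 - ∑ d ∈ F, a d ≤ ∏ d ∈ F, (1 - a d) := by
  classical
  induction F using Finset.induction_on with
  | empty => simp
  | @insert x F hx ih =>
    rw [Finset.sum_insert hx, Finset.prod_insert hx]
    have hs : 0 ≤ ∑ d ∈ F, a d := Finset.sum_nonneg fun i _ => h0 i
    nlinarith [mul_le_mul_of_nonneg_left ih (by linarith [h1 x] : (0:ℝ) ≤ 1 - a x),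
      mul_nonneg (h0 x) hs]

/-- For real `q ≥ 2` and integers `b > r > 0`,
`Π_{d=1}^∞ (1 − q^{−d(b−r+1)})^{2 r q^d} > 1 − 2r/(q^{b−r} − 1)`. -/
theorem stmt13 (q : ℝ) (hq : 2 ≤ q) (r b : ℕ) (hr : 0 < r) (hrb : r < b)
    (h : 2 * (r : ℝ) / (q ^ (b - r) - 1) < 1) :
    1 - 2 * (r : ℝ) / (q ^ (b - r) - 1)
      < ∏' d : ℕ, (1 - 1 / q ^ ((d + 1) * (b - r + 1))) ^ ((2 * (r : ℝ)) * q ^ (d + 1)) := by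
  classical
  set m := b - r with hm
  have hm1 : 1 ≤ m := by omega
  have hq1 : (1:ℝ) ≤ q := by linarith
  have hq0 : (0:ℝ) < q := by linarith
  have hr1 : (1:ℝ) ≤ (r:ℝ) := by exact_mod_cast hr
  set c : ℝ := q ^ m with hc
  have hc2 : (2:ℝ) ≤ c := le_trans hq (le_self_pow₀ hq1 (by omega))
  have hc0 : (0:ℝ) < c := by linarith
  have hc1 : (0:ℝ) < c - 1 := by linarith
  -- the sequence of subtracted terms
  set a : ℕ → ℝ := fun d => 2 * (r:ℝ) / c ^ (d + 1) with ha
  set S : ℝ := 2 * (r:ℝ) / (c - 1) with hS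
  have hS1 : S < 1 := h
  have hS0 : 0 < S := by positivity
  have ha0 : ∀ d, 0 < a d := fun d => by positivity
  have haS : ∀ d, a d ≤ S := by
    intro d
    rw [ha, hS]
    apply div_le_div_of_nonneg_left (by positivity) hc1
    calc c - 1 ≤ c := by linarith
      _ ≤ c ^ (d + 1) := le_self_pow₀ (by linarith) (by omega)
  have ha1 : ∀ d, a d ≤ 1 := fun d => le_of_lt (lt_of_le_of_lt (haS d) hS1)
  -- summability and tsum of `a`
  have hgeo : Summable (fun d : ℕ => (2 * (r:ℝ) / c) * (1 / c) ^ d) :=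
    (summable_geometric_of_lt_one (by positivity) (by rw [div_lt_one hc0]; linarith)).mul_left _
  have haeq : a = fun d : ℕ => (2 * (r:ℝ) / c) * (1 / c) ^ d := by
    funext d
    rw [ha]
    field_simp [pow_succ]
    ring_nf
    rw [inv_pow, mul_assoc, mul_inv_cancel₀ (pow_ne_zero _ hc0.ne'), mul_one]
  have hsum : Summable a := by rw [haeq]; exact hgeo
  have htsum : ∑' d, a d = S := by
    rw [haeq, tsum_mul_left, tsum_geometric_of_lt_one (by positivity)
      (by rw [div_lt_one hc0]; linarith), hS]
    have hcne : c ≠ 0 := by linarith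
    have hc1ne : c - 1 ≠ 0 := by linarith
    rw [show (1 - 1/c : ℝ) = (c-1)/c by field_simp, inv_div]
    field_simp
  -- tail sum
  set g : ℕ → ℝ := fun d => if d = 0 then 0 else a d with hg
  have hg0 : ∀ d, 0 ≤ g d := by
    intro d; rw [hg]; dsimp only; split <;> [rfl; exact le_of_lt (ha0 _)]
  have hgsum : Summable g := by
    apply Summable.of_nonneg_of_le hg0 _ hsum
    intro d; rw [hg]; dsimp only; split <;> [exact le_of_lt (ha0 _); rfl]
  have htg : ∑' d, g d = S - a 0 := by
    have := Summable.tsum_eq_add_tsum_ite hsum 0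
    rw [htsum] at this
    have h2 : ∑' (n : ℕ), (if n = 0 then 0 else a n) = ∑' d, g d := by rfl
    rw [h2] at this
    linarith
  have hS' : 0 < S - a 0 := by
    rw [← htg]
    have h1le : g 1 ≤ ∑' d, g d := Summable.le_tsum hgsum 1 fun i _ => hg0 i
    have : 0 < g 1 := by rw [hg]; simpa using ha0 1
    linarith
  -- the factors
  set f : ℕ → ℝ := fun d => (1 - 1 / q ^ ((d + 1) * (m + 1))) ^ ((2 * (r : ℝ)) * q ^ (d + 1))
    with hf
  have hqpow1 : ∀ n : ℕ, (1:ℝ) ≤ q ^ n := fun n => one_le_pow₀ hq1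
  -- pointwise Bernoulli bound
  have hkey : ∀ d, 1 - a d ≤ f d := by
    intro d
    have ht1 : 1 / q ^ ((d + 1) * (m + 1)) ≤ 1 := by
      rw [div_le_one (by positivity)]; exact hqpow1 _
    have hp1 : (1:ℝ) ≤ (2 * (r:ℝ)) * q ^ (d + 1) := by
      nlinarith [hqpow1 (d + 1)]
    have hB := one_add_mul_self_le_rpow_one_add
      (s := -(1 / q ^ ((d + 1) * (m + 1)))) (p := (2 * (r:ℝ)) * q ^ (d + 1))
      (by linarith) hp1
    have hpt : ((2 * (r:ℝ)) * q ^ (d + 1)) * (1 / q ^ ((d + 1) * (m + 1))) = a d := by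
      have hsplit : q ^ ((d + 1) * (m + 1)) = c ^ (d + 1) * q ^ (d + 1) := by
        rw [hc, ← pow_mul]
        rw [← pow_add]
        congr 1
        ring
      rw [ha, hsplit]
      have : (0:ℝ) < c ^ (d + 1) := by positivity
      field_simp
    rw [hf]
    dsimp only
    calc 1 - a d = 1 + ((2 * (r:ℝ)) * q ^ (d + 1)) * (-(1 / q ^ ((d + 1) * (m + 1)))) := by
          rw [mul_neg, hpt]; ring
      _ ≤ (1 + -(1 / q ^ ((d + 1) * (m + 1)))) ^ ((2 * (r:ℝ)) * q ^ (d + 1)) := hB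
      _ = (1 - 1 / q ^ ((d + 1) * (m + 1))) ^ ((2 * (r:ℝ)) * q ^ (d + 1)) := by ring_nf
  have hf0 : ∀ d, 0 ≤ f d := by
    intro d
    rw [hf]; dsimp only
    apply Real.rpow_nonneg
    have : 1 / q ^ ((d + 1) * (m + 1)) ≤ 1 := by
      rw [div_le_one (by positivity)]; exact hqpow1 _
    linarith
  have hfle1 : ∀ d, f d ≤ 1 := by
    intro d
    rw [hf]; dsimp only
    apply Real.rpow_le_one
    · have : 1 / q ^ ((d + 1) * (m + 1)) ≤ 1 := by
        rw [div_le_one (by positivity)]; exact hqpow1 _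
      linarith
    · have : 0 < 1 / q ^ ((d + 1) * (m + 1)) := by positivity
      linarith
    · nlinarith [hqpow1 (d + 1)]
  -- lower bound for all finite partial products
  set B : ℝ := (1 - a 0) * (1 - (S - a 0)) with hB
  have hbound : ∀ F : Finset ℕ, B ≤ ∏ d ∈ F, f d := by
    intro F
    have step1 : ∏ d ∈ F, (1 - a d) ≤ ∏ d ∈ F, f d :=
      Finset.prod_le_prod (fun i _ => by linarith [ha1 i]) (fun i _ => hkey i)
    have htail : ∑ d ∈ F.erase 0, a d ≤ S - a 0 := by
      have e1 : ∑ d ∈ F.erase 0, a d = ∑ d ∈ F.erase 0, g d := by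
        apply Finset.sum_congr rfl
        intro x hx
        have : x ≠ 0 := Finset.ne_of_mem_erase hx
        rw [hg]; simp [this]
      rw [e1, ← htg]
      exact Summable.sum_le_tsum _ (fun i _ => hg0 i) hgsum
    have ha00 : 0 ≤ 1 - a 0 := by linarith [ha1 0]
    by_cases h0 : 0 ∈ F
    · have e2 : ∏ d ∈ F, (1 - a d) = (1 - a 0) * ∏ d ∈ F.erase 0, (1 - a d) :=
        (Finset.mul_prod_erase F _ h0).symm
      have w := weier_aux a (fun d => le_of_lt (ha0 d)) ha1 (F.erase 0)
      have : (1 - a 0) * (1 - (S - a 0)) ≤ (1 - a 0) * ∏ d ∈ F.erase 0, (1 - a d) := by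
        apply mul_le_mul_of_nonneg_left _ ha00
        linarith
      rw [hB]
      calc (1 - a 0) * (1 - (S - a 0)) ≤ ∏ d ∈ F, (1 - a d) := by rw [e2]; exact this
        _ ≤ ∏ d ∈ F, f d := step1
    · have e3 : F.erase 0 = F := Finset.erase_eq_of_notMem h0
      rw [e3] at htail
      have w := weier_aux a (fun d => le_of_lt (ha0 d)) ha1 F
      have hB' : B ≤ 1 - ∑ d ∈ F, a d := by
        rw [hB]
        nlinarith [ha0 0, ha1 0]
      linarith
  -- the product converges to the infimum of finite partial products
  have hanti : Antitone (fun F : Finset ℕ => ∏ d ∈ F, f d) := by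
    intro F F' hFF'
    dsimp only
    have := Finset.prod_sdiff (f := f) hFF'
    rw [← this]
    have h1 : ∏ d ∈ F' \ F, f d ≤ 1 :=
      Finset.prod_le_one (fun i _ => hf0 i) (fun i _ => hfle1 i)
    nlinarith [Finset.prod_nonneg (fun i (_ : i ∈ F) => hf0 i)]
  have hbdd : BddBelow (Set.range fun F : Finset ℕ => ∏ d ∈ F, f d) := by
    refine ⟨0, ?_⟩
    rintro x ⟨F, rfl⟩
    exact Finset.prod_nonneg fun i _ => hf0 i
  have hprod : HasProd f (⨅ F : Finset ℕ, ∏ d ∈ F, f d) :=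
    tendsto_atTop_ciInf hanti hbdd
  have heq : ∏' d, f d = ⨅ F : Finset ℕ, ∏ d ∈ F, f d := hprod.tprod_eq
  have hlow : B ≤ ∏' d, f d := by
    rw [heq]
    exact le_ciInf hbound
  -- conclude
  have hfin : 1 - S < B := by
    rw [hB]
    nlinarith [mul_pos (ha0 0) hS']
  calc 1 - S < B := hfin
    _ ≤ ∏' d, f d := hlow
end

section
/- Let S be a b×b matrix sequence over F annihilated by f ∈ F[x] (monic of degree d), and let φ_f : sequences annihilated by f → (F[x]/(f))^{b×b} be applied entrywise, where the scalar φ_f(T) = P·(T_0,...,T_{d−1})^T with P the Taussky intertwiner. Then for any G ∈ F[x]^{b×b}, φ_f(SG) = φ_f(S)·G (the product taken in (F[x]/(f))^{b×b}); consequently G generates S (i.e., SG = 0 and det G ≠ 0) if and only if φ_f(S)·G = 0 over F[x]/(f) and det G ≠ 0. -/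
open Polynomial Matrix

/-- The `i`-th coefficient matrix of a matrix of polynomials. -/
def matCoeff {F : Type*} [Field F] {b : ℕ} (G : Matrix (Fin b) (Fin b) F[X]) (i : ℕ) :
    Matrix (Fin b) (Fin b) F :=
  G.map fun p => p.coeff i

/-- The degree of a matrix of polynomials. -/
def matDeg {F : Type*} [Field F] {b : ℕ} (G : Matrix (Fin b) (Fin b) F[X]) : ℕ :=
  Finset.univ.sup fun ij : Fin b × Fin b => (G ij.1 ij.2).natDegree

/-- `G` generates the matrix sequence `S`. -/
def SeqGen {F : Type*} [Field F] {b : ℕ} (S : ℕ → Matrix (Fin b) (Fin b) F)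
    (G : Matrix (Fin b) (Fin b) F[X]) : Prop :=
  G.det ≠ 0 ∧ ∀ k : ℕ, ∑ i ∈ Finset.range (matDeg G + 1), S (k + i) * matCoeff G i = 0

/-- `φ_f` applied entrywise to a `b×b` matrix sequence annihilated by `f`: the entry `(i,j)`
is (the polynomial representative of) `P·ω_f(S_{·,ij})`. -/
noncomputable def phiMat {F : Type*} [Field F] {b : ℕ} (d : ℕ)
    (P : Matrix (Fin d) (Fin d) F) (S : ℕ → Matrix (Fin b) (Fin b) F) :
    Matrix (Fin b) (Fin b) F[X] :=
  Matrix.of fun i j => vecToPoly (P *ᵥ fun l : Fin d => S (l : ℕ) i j)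

section aux
variable {F : Type*} [Field F]

lemma vecToPoly_coeff {d : ℕ} (v : Fin d → F) (n : ℕ) :
    (vecToPoly v).coeff n = if h : n < d then v ⟨n, h⟩ else 0 := by
  unfold vecToPoly
  rw [finset_sum_coeff]
  simp only [coeff_C_mul, coeff_X_pow, mul_ite, mul_one, mul_zero]
  split
  · next h =>
    rw [Finset.sum_eq_single (⟨n, h⟩ : Fin d)]
    · simp
    · intro j _ hj
      simp only [ite_eq_right_iff]
      intro he; exact absurd (Fin.ext he.symm) hj
    · simp
  · next h =>
    apply Finset.sum_eq_zero
    intro j _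
    simp only [ite_eq_right_iff]
    intro he; omega

lemma vecToPoly_zero {d : ℕ} : vecToPoly (fun _ : Fin d => (0:F)) = 0 := by
  simp [vecToPoly]

lemma vecToPoly_sum {d : ℕ} {ι : Type*} (s : Finset ι) (v : ι → Fin d → F) :
    vecToPoly (fun l => ∑ m ∈ s, v m l) = ∑ m ∈ s, vecToPoly (v m) := by
  ext n
  simp [vecToPoly_coeff, finset_sum_coeff]

lemma vecToPoly_smul {d : ℕ} (c : F) (v : Fin d → F) :
    vecToPoly (fun l => c * v l) = C c * vecToPoly v := by
  ext n
  simp [vecToPoly_coeff, coeff_C_mul]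

lemma vecToPoly_degree_lt {d : ℕ} (v : Fin d → F) : (vecToPoly v).degree < (d : ℕ) := by
  rw [degree_lt_iff_coeff_zero]
  intro m hm
  rw [vecToPoly_coeff]
  simp [Nat.not_lt.mpr hm]

lemma companion_mulVec {f : F[X]} {d : ℕ} (hd1 : 1 ≤ d) (w : Fin d → F) (i : Fin d) :
    (companionMat f d *ᵥ w) i
      = (if h : 1 ≤ (i : ℕ) then w ⟨(i : ℕ) - 1, by omega⟩ else 0)
        - f.coeff i * w ⟨d - 1, by omega⟩ := by
  unfold companionMat
  simp only [mulVec, dotProduct]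
  have hsplit : ∀ j : Fin d,
      (if (j : ℕ) + 1 = d then -f.coeff i else if (i : ℕ) = (j : ℕ) + 1 then 1 else 0) * w j
      = (if j = (⟨d - 1, by omega⟩ : Fin d) then -f.coeff i * w ⟨d - 1, by omega⟩ else 0)
        + (if (j : ℕ) + 1 ≠ d ∧ (i : ℕ) = (j : ℕ) + 1 then w j else 0) := by
    intro j
    by_cases h : (j : ℕ) + 1 = d
    · have hj : j = (⟨d - 1, by omega⟩ : Fin d) := Fin.ext (show (j : ℕ) = d - 1 by omega)
      rw [if_pos h, if_pos hj, if_neg (fun hc => hc.1 h), hj, add_zero, neg_mul]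
    · have hj : j ≠ (⟨d - 1, by omega⟩ : Fin d) :=
        fun he => h (by rw [he]; show d - 1 + 1 = d; omega)
      rw [if_neg h, if_neg hj, zero_add]
      by_cases hi : (i : ℕ) = (j : ℕ) + 1
      · rw [if_pos hi, if_pos ⟨h, hi⟩, one_mul]
      · rw [if_neg hi, if_neg (fun hc => hi hc.2), zero_mul]
  rw [Finset.sum_congr rfl (fun j _ => hsplit j), Finset.sum_add_distrib]
  rw [Finset.sum_ite_eq' Finset.univ]
  simp only [Finset.mem_univ, if_true]
  have h2 : ∑ j : Fin d, (if (j : ℕ) + 1 ≠ d ∧ (i : ℕ) = (j : ℕ) + 1 then w j else 0)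
      = (if h : 1 ≤ (i : ℕ) then w ⟨(i : ℕ) - 1, by omega⟩ else 0) := by
    split
    · next h =>
      rw [Finset.sum_eq_single (⟨(i : ℕ) - 1, by omega⟩ : Fin d)]
      · rw [if_pos ⟨show ¬((i:ℕ) - 1 + 1 = d) by have := i.isLt; omega,
          show (i:ℕ) = (i:ℕ) - 1 + 1 by omega⟩]
      · intro j _ hj
        rw [if_neg]
        rintro ⟨h1, h2⟩
        exact hj (Fin.ext (show (j:ℕ) = (i:ℕ) - 1 by omega))
      · simp
    · next h =>
      apply Finset.sum_eq_zero
      intro j _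
      rw [if_neg]; rintro ⟨h1, h2⟩; omega
  rw [h2]
  ring

lemma vecToPoly_companion_mulVec {f : F[X]} (hm : f.Monic) {d : ℕ} (hd : f.natDegree = d)
    (hd1 : 1 ≤ d) (w : Fin d → F) :
    vecToPoly (companionMat f d *ᵥ w)
      = X * vecToPoly w - C (w ⟨d - 1, by omega⟩) * f := by
  ext n
  rw [coeff_sub, coeff_C_mul, vecToPoly_coeff]
  rcases n with _ | n
  · have h0 : (X * vecToPoly w).coeff 0 = 0 := by simp
    rw [h0, dif_pos (show 0 < d by omega), companion_mulVec hd1, dif_neg (by simp)]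
    show 0 - f.coeff 0 * w ⟨d - 1, by omega⟩ = 0 - w ⟨d - 1, by omega⟩ * f.coeff 0
    ring
  · rw [coeff_X_mul, vecToPoly_coeff]
    by_cases h : n + 1 < d
    · rw [dif_pos h, companion_mulVec hd1, dif_pos (show 1 ≤ n + 1 by omega),
        dif_pos (show n < d by omega)]
      show w ⟨n + 1 - 1, _⟩ - f.coeff (n+1) * w ⟨d - 1, _⟩ = w ⟨n, _⟩ - w ⟨d-1, _⟩ * f.coeff (n+1)
      rw [show (⟨n + 1 - 1, by omega⟩ : Fin d) = ⟨n, by omega⟩ from Fin.ext (show n + 1 - 1 = n by omega)]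
      ring
    · rw [dif_neg h]
      by_cases h2 : n < d
      · have hn : n = d - 1 := by omega
        have hc : f.coeff (n + 1) = 1 := by
          rw [show n + 1 = f.natDegree by omega]; exact hm.coeff_natDegree
        rw [dif_pos h2, hc,
          show (⟨n, h2⟩ : Fin d) = ⟨d - 1, by omega⟩ from Fin.ext (show n = d - 1 by omega)]
        ring
      · rw [dif_neg h2, coeff_eq_zero_of_natDegree_lt (by omega)]
        ring

lemma shift_vec {f : F[X]} (hm : f.Monic) {d : ℕ} (hd : f.natDegree = d) (hd1 : 1 ≤ d)
    (T : ℕ → F) (hT : ∀ k : ℕ, ∑ i ∈ Finset.range (d + 1), f.coeff i * T (k + i) = 0) :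
    (fun l : Fin d => T ((l : ℕ) + 1)) = (companionMat f d)ᵀ *ᵥ (fun l : Fin d => T l) := by
  funext i
  simp only [mulVec, dotProduct]
  simp only [transpose_apply]
  unfold companionMat
  by_cases h : (i : ℕ) + 1 = d
  · -- last row: T d = -∑ f_j T j
    have hsum := hT 0
    rw [Finset.sum_range_succ] at hsum
    have hfd : f.coeff d = 1 := by rw [← hd]; exact hm.coeff_natDegree
    simp only [zero_add, hfd, one_mul] at hsum
    have : ∑ j : Fin d, (if (i : ℕ) + 1 = d then -f.coeff j else
        if (j : ℕ) = (i : ℕ) + 1 then 1 else 0) * T j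
        = ∑ j : Fin d, -(f.coeff j * T j) := by
      apply Finset.sum_congr rfl
      intro j _
      rw [if_pos h]; ring
    rw [this, Fin.sum_univ_eq_sum_range (fun j => -(f.coeff j * T j)), h]
    rw [Finset.sum_neg_distrib]
    exact eq_neg_of_add_eq_zero_right hsum
  · rw [Finset.sum_eq_single (⟨(i : ℕ) + 1, by have := i.isLt; omega⟩ : Fin d)]
    · rw [if_neg h, if_pos rfl, one_mul]
    · intro j _ hj
      rw [if_neg h, if_neg, zero_mul]
      intro hc
      exact hj (Fin.ext (show (j : ℕ) = (i : ℕ) + 1 from hc))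
    · simp

lemma phi_shift_one {f : F[X]} (hm : f.Monic) {d : ℕ} (hd : f.natDegree = d) (hd1 : 1 ≤ d)
    {P : Matrix (Fin d) (Fin d) F}
    (hPint : ∀ a : F[X], P * (Polynomial.aeval (companionMat f d) a)ᵀ
        = Polynomial.aeval (companionMat f d) a * P)
    (T : ℕ → F) (hT : ∀ k : ℕ, ∑ i ∈ Finset.range (d + 1), f.coeff i * T (k + i) = 0) :
    AdjoinRoot.mk f (vecToPoly (P *ᵥ fun l : Fin d => T ((l : ℕ) + 1)))
      = AdjoinRoot.mk f X * AdjoinRoot.mk f (vecToPoly (P *ᵥ fun l : Fin d => T l)) := by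
  rw [shift_vec hm hd hd1 T hT, mulVec_mulVec]
  have hX := hPint X
  rw [Polynomial.aeval_X] at hX
  rw [hX, ← mulVec_mulVec, vecToPoly_companion_mulVec hm hd hd1]
  rw [map_sub, _root_.map_mul, _root_.map_mul, AdjoinRoot.mk_self, mul_zero, sub_zero]

lemma phi_shift {f : F[X]} (hm : f.Monic) {d : ℕ} (hd : f.natDegree = d) (hd1 : 1 ≤ d)
    {P : Matrix (Fin d) (Fin d) F}
    (hPint : ∀ a : F[X], P * (Polynomial.aeval (companionMat f d) a)ᵀ
        = Polynomial.aeval (companionMat f d) a * P)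
    (T : ℕ → F) (hT : ∀ k : ℕ, ∑ i ∈ Finset.range (d + 1), f.coeff i * T (k + i) = 0)
    (m : ℕ) :
    AdjoinRoot.mk f (vecToPoly (P *ᵥ fun l : Fin d => T ((l : ℕ) + m)))
      = (AdjoinRoot.mk f X) ^ m * AdjoinRoot.mk f (vecToPoly (P *ᵥ fun l : Fin d => T l)) := by
  induction m with
  | zero => simp
  | succ m ih =>
    have hT' : ∀ k : ℕ, ∑ i ∈ Finset.range (d + 1), f.coeff i * T ((k + i) + m) = 0 := by
      intro k
      have h0 := hT (k + m)
      rw [← h0]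
      apply Finset.sum_congr rfl
      intro i _
      rw [show k + i + m = k + m + i by omega]
    have h := phi_shift_one hm hd hd1 hPint (fun k => T (k + m)) hT'
    have e1 : (fun l : Fin d => (fun k => T (k + m)) ((l : ℕ) + 1))
        = fun l : Fin d => T ((l : ℕ) + (m + 1)) := by
      funext l
      show T ((l : ℕ) + 1 + m) = T ((l : ℕ) + (m + 1))
      rw [show (l : ℕ) + 1 + m = (l : ℕ) + (m + 1) by omega]
    have e2 : (fun l : Fin d => (fun k => T (k + m)) ((l : ℕ)))
        = fun l : Fin d => T ((l : ℕ) + m) := rfl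
    rw [e1, e2] at h
    rw [h, ih]
    ring

lemma phi_scalar_main {f : F[X]} (hm : f.Monic) {d : ℕ} (hd : f.natDegree = d) (hd1 : 1 ≤ d)
    {P : Matrix (Fin d) (Fin d) F}
    (hPint : ∀ a : F[X], P * (Polynomial.aeval (companionMat f d) a)ᵀ
        = Polynomial.aeval (companionMat f d) a * P)
    (T : ℕ → F) (hT : ∀ k : ℕ, ∑ i ∈ Finset.range (d + 1), f.coeff i * T (k + i) = 0)
    (g : F[X]) (N : ℕ) (hN : g.natDegree < N) :
    AdjoinRoot.mk f (vecToPoly (P *ᵥ fun l : Fin d => ∑ m ∈ Finset.range N, T ((l : ℕ) + m) * g.coeff m))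
      = AdjoinRoot.mk f (vecToPoly (P *ᵥ fun l : Fin d => T l)) * AdjoinRoot.mk f g := by
  have hmv : (P *ᵥ fun l' : Fin d => ∑ m ∈ Finset.range N, T ((l' : ℕ) + m) * g.coeff m)
      = fun l => ∑ m ∈ Finset.range N, g.coeff m * (P *ᵥ fun l' : Fin d => T ((l' : ℕ) + m)) l := by
    funext l
    simp only [mulVec, dotProduct, Finset.mul_sum]
    rw [Finset.sum_comm]
    apply Finset.sum_congr rfl
    intro m _
    apply Finset.sum_congr rfl
    intro j _
    ring
  rw [hmv, vecToPoly_sum, map_sum]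
  have : ∀ m ∈ Finset.range N,
      AdjoinRoot.mk f (vecToPoly fun l => g.coeff m * (P *ᵥ fun l' : Fin d => T ((l' : ℕ) + m)) l)
      = AdjoinRoot.mk f (C (g.coeff m) * X ^ m) * AdjoinRoot.mk f (vecToPoly (P *ᵥ fun l : Fin d => T l)) := by
    intro m _
    rw [vecToPoly_smul, _root_.map_mul, phi_shift hm hd hd1 hPint T hT m, _root_.map_mul, map_pow]
    ring
  rw [Finset.sum_congr rfl this, ← Finset.sum_mul, ← map_sum]
  have hg : ∑ m ∈ Finset.range N, C (g.coeff m) * X ^ m = g := by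
    conv_rhs => rw [g.as_sum_range' N hN]
    apply Finset.sum_congr rfl
    intro m _
    rw [C_mul_X_pow_eq_monomial]
  rw [hg]
  ring

lemma mulVec_sum' {d : ℕ} (P : Matrix (Fin d) (Fin d) F) {ι : Type*} (s : Finset ι)
    (v : ι → Fin d → F) :
    (P *ᵥ fun l => ∑ m ∈ s, v m l) = fun l => ∑ m ∈ s, (P *ᵥ v m) l := by
  funext l
  simp only [mulVec, dotProduct, Finset.mul_sum]
  exact Finset.sum_comm

lemma phi_inj {f : F[X]} (hm : f.Monic) {d : ℕ} (hd : f.natDegree = d) (hd1 : 1 ≤ d)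
    {P : Matrix (Fin d) (Fin d) F} (hP : P.det ≠ 0)
    (T : ℕ → F) (hT : ∀ k : ℕ, ∑ i ∈ Finset.range (d + 1), f.coeff i * T (k + i) = 0)
    (h0 : AdjoinRoot.mk f (vecToPoly (P *ᵥ fun l : Fin d => T l)) = 0) (k : ℕ) : T k = 0 := by
  have hdvd : f ∣ vecToPoly (P *ᵥ fun l : Fin d => T l) := AdjoinRoot.mk_eq_zero.mp h0
  have hpz : vecToPoly (P *ᵥ fun l : Fin d => T l) = 0 :=
    Polynomial.eq_zero_of_dvd_of_degree_lt hdvd (by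
      rw [degree_eq_natDegree hm.ne_zero, hd]
      exact_mod_cast vecToPoly_degree_lt _)
  have hvz : (P *ᵥ fun l : Fin d => T l) = 0 := by
    funext l
    have h1 := congrArg (fun p => Polynomial.coeff p (l : ℕ)) hpz
    simp only [vecToPoly_coeff, coeff_zero] at h1
    rw [dif_pos l.isLt] at h1
    simpa using h1
  have hTz : (fun l : Fin d => T l) = 0 := by
    have h1 : P⁻¹ *ᵥ (P *ᵥ fun l : Fin d => T l) = P⁻¹ *ᵥ 0 := by rw [hvz]
    rwa [mulVec_mulVec, Matrix.nonsing_inv_mul P (isUnit_iff_ne_zero.mpr hP), one_mulVec,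
      mulVec_zero] at h1
  induction k using Nat.strong_induction_on with
  | _ k ih =>
    by_cases hk : k < d
    · exact congrFun hTz ⟨k, hk⟩
    · have h2 := hT (k - d)
      rw [Finset.sum_range_succ] at h2
      have hfd : f.coeff d = 1 := by rw [← hd]; exact hm.coeff_natDegree
      have hrest : ∑ i ∈ Finset.range d, f.coeff i * T (k - d + i) = 0 := by
        apply Finset.sum_eq_zero
        intro i hi
        rw [ih (k - d + i) (by simp at hi; omega), mul_zero]
      rw [hrest, hfd, one_mul, zero_add, show k - d + d = k by omega] at h2
      exact h2

end aux

/-- `φ_f(SG) = φ_f(S)·G` in `(F[x]/(f))^{b×b}`; consequently `G` generates `S` iff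
`φ_f(S)·G = 0` over `F[x]/(f)` and `det G ≠ 0`. -/
theorem stmt18 {F : Type*} [Field F] (f : F[X]) (hmonic : f.Monic)
    (d : ℕ) (hd : f.natDegree = d) (hd1 : 1 ≤ d) (b : ℕ)
    (S : ℕ → Matrix (Fin b) (Fin b) F)
    (hS : ∀ k : ℕ, ∑ i ∈ Finset.range (d + 1), f.coeff i • S (k + i) = 0)
    (P : Matrix (Fin d) (Fin d) F) (hP : P.det ≠ 0)
    (hPint : ∀ a : F[X], P * (Polynomial.aeval (companionMat f d) a)ᵀ
        = Polynomial.aeval (companionMat f d) a * P)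
    (G : Matrix (Fin b) (Fin b) F[X]) :
    ((phiMat d P (fun k => ∑ i ∈ Finset.range (matDeg G + 1),
          S (k + i) * matCoeff G i)).map (AdjoinRoot.mk f)
        = (phiMat d P S).map (AdjoinRoot.mk f) * G.map (AdjoinRoot.mk f))
    ∧ (SeqGen S G ↔
        ((phiMat d P S).map (AdjoinRoot.mk f) * G.map (AdjoinRoot.mk f) = 0 ∧ G.det ≠ 0)) := by
  set N : ℕ := matDeg G + 1 with hNdef
  -- entrywise annihilation of S
  have hS' : ∀ (i p : Fin b) (k : ℕ),
      ∑ n ∈ Finset.range (d + 1), f.coeff n * S (k + n) i p = 0 := by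
    intro i p k
    have h := congrFun (congrFun (hS k) i) p
    simpa [Matrix.sum_apply] using h
  -- degree bound
  have hdeg : ∀ (p j : Fin b), (G p j).natDegree < N := by
    intro p j
    have : (G p j).natDegree ≤ matDeg G :=
      Finset.le_sup (f := fun ij : Fin b × Fin b => (G ij.1 ij.2).natDegree)
        (Finset.mem_univ (p, j))
    omega
  -- Part 1
  have key : (phiMat d P (fun k => ∑ i ∈ Finset.range N,
          S (k + i) * matCoeff G i)).map (AdjoinRoot.mk f)
        = (phiMat d P S).map (AdjoinRoot.mk f) * G.map (AdjoinRoot.mk f) := by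
    ext i j
    rw [Matrix.map_apply, Matrix.mul_apply]
    show AdjoinRoot.mk f (vecToPoly (P *ᵥ fun l : Fin d =>
        (∑ m ∈ Finset.range N, S ((l : ℕ) + m) * matCoeff G m) i j)) = _
    have hv : (fun l : Fin d => (∑ m ∈ Finset.range N, S ((l : ℕ) + m) * matCoeff G m) i j)
        = fun l : Fin d => ∑ p : Fin b,
            (∑ m ∈ Finset.range N, S ((l : ℕ) + m) i p * (G p j).coeff m) := by
      funext l
      rw [Matrix.sum_apply]
      rw [show (∑ m ∈ Finset.range N, (S ((l : ℕ) + m) * matCoeff G m) i j)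
          = ∑ m ∈ Finset.range N, ∑ p : Fin b, S ((l : ℕ) + m) i p * (G p j).coeff m from
        Finset.sum_congr rfl fun m _ => by rw [Matrix.mul_apply]; rfl]
      exact Finset.sum_comm
    rw [hv, mulVec_sum' P Finset.univ, vecToPoly_sum, map_sum]
    apply Finset.sum_congr rfl
    intro p _
    have := phi_scalar_main hmonic hd hd1 hPint (fun n => S n i p) (hS' i p) (G p j) N (hdeg p j)
    rw [Matrix.map_apply]
    show _ = AdjoinRoot.mk f (vecToPoly (P *ᵥ fun l : Fin d => S (l : ℕ) i p))
        * AdjoinRoot.mk f (G p j)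
    exact this
  refine ⟨key, ?_, ?_⟩
  · rintro ⟨hdet, hgen⟩
    refine ⟨?_, hdet⟩
    rw [← key]
    have hz : (fun k => ∑ m ∈ Finset.range N, S (k + m) * matCoeff G m)
        = fun _ => (0 : Matrix (Fin b) (Fin b) F) := funext hgen
    rw [hz]
    ext i j
    show AdjoinRoot.mk f (vecToPoly (P *ᵥ (0 : Fin d → F))) = 0
    rw [mulVec_zero]
    have : vecToPoly (0 : Fin d → F) = 0 := vecToPoly_zero
    rw [this, map_zero]
  · rintro ⟨hzero, hdet⟩
    refine ⟨hdet, ?_⟩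
    intro k
    have hz2 : (phiMat d P (fun k => ∑ m ∈ Finset.range N,
        S (k + m) * matCoeff G m)).map (AdjoinRoot.mk f) = 0 := key.trans hzero
    -- entrywise annihilation of SG
    have hSg : ∀ (i j : Fin b) (k : ℕ), ∑ n ∈ Finset.range (d + 1),
        f.coeff n * (∑ m ∈ Finset.range N, S ((k + n) + m) * matCoeff G m) i j = 0 := by
      intro i j k
      have step : ∀ n, f.coeff n * (∑ m ∈ Finset.range N, S ((k + n) + m) * matCoeff G m) i j
          = ∑ m ∈ Finset.range N, ∑ p : Fin b,
              f.coeff n * (S ((k + n) + m) i p * matCoeff G m p j) := by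
        intro n
        rw [Matrix.sum_apply, Finset.mul_sum]
        apply Finset.sum_congr rfl
        intro m _
        rw [Matrix.mul_apply, Finset.mul_sum]
      rw [Finset.sum_congr rfl (fun n _ => step n), Finset.sum_comm]
      apply Finset.sum_eq_zero
      intro m _
      rw [Finset.sum_comm]
      apply Finset.sum_eq_zero
      intro p _
      have hinner : ∑ n ∈ Finset.range (d + 1),
          f.coeff n * (S ((k + n) + m) i p * matCoeff G m p j)
          = (∑ n ∈ Finset.range (d + 1), f.coeff n * S ((k + m) + n) i p)
              * matCoeff G m p j := by
        rw [Finset.sum_mul]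
        apply Finset.sum_congr rfl
        intro n _
        rw [show k + n + m = k + m + n by omega]
        ring
      rw [hinner, hS' i p (k + m), zero_mul]
    ext i j
    have h0 : AdjoinRoot.mk f (vecToPoly (P *ᵥ fun l : Fin d =>
        (∑ m ∈ Finset.range N, S ((l : ℕ) + m) * matCoeff G m) i j)) = 0 := by
      have := congrFun (congrFun hz2 i) j
      exact this
    exact phi_inj hmonic hd hd1 hP
      (fun n => (∑ m ∈ Finset.range N, S (n + m) * matCoeff G m) i j) (hSg i j) h0 k
end
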